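/- arXiv:2404.19033 — 7 statements merged into one kernel-verified Lean document; each statement's English description precedes it below -/
import Mathlib

section
/- Every element of ker ad(f) is κ-orthogonal to 𝔪_l: for all y ∈ 𝔤 with ⁅f,y⁆ = 0 and all z ∈ 𝔪_l, one has κ(y,z) = 0. -/
open LieAlgebra

variable {L : Type*} [LieRing L] [LieAlgebra ℂ L]

/-- The eigenspace `𝔤ᵢ` of `ad h` with eigenvalue `i ∈ ℤ`. -/
noncomputable def gEig (h : L) (i : ℤ) : Submodule ℂ L :=
  Module.End.eigenspace ((ad ℂ L h)) (i : ℂ)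

/-- `𝔤_{≤k}`, the sum of the eigenspaces `𝔤ᵢ` for `i ≤ k`. -/
noncomputable def gLe (h : L) (k : ℤ) : Submodule ℂ L :=
  ⨆ i ∈ Set.Iic k, gEig h i

/-- `l^{⊥ω} = {y ∈ 𝔤₋₁ : ω(x, y) = 0 for all x ∈ l}`, where `ω(x, y) = κ(⁅x, y⁆, e)`. -/
noncomputable def lPerpOmega (e h : L) (l : Submodule ℂ L) : Submodule ℂ L :=
  gEig h (-1) ⊓
    ⨅ x ∈ l, LinearMap.ker (((killingForm ℂ L).flip e).comp (ad ℂ L x))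

/-- `𝔫_l = l + 𝔤_{≤ -2}`. -/
noncomputable def nSub (h : L) (l : Submodule ℂ L) : Submodule ℂ L :=
  l ⊔ gLe h (-2)

/-- `𝔪_l = l^{⊥ω} + 𝔤_{≤ -2}`. -/
noncomputable def mSub (e h : L) (l : Submodule ℂ L) : Submodule ℂ L :=
  lPerpOmega e h l ⊔ gLe h (-2)

/-- Every element of `ker (ad f)` is `κ`-orthogonal to `𝔪_l`. -/
theorem stmt1 {L : Type*} [LieRing L] [LieAlgebra ℂ L]
    [Module.Finite ℂ L] [LieAlgebra.IsSemisimple ℂ L]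
    (e h f : L) (he : e ≠ 0)
    (hhe : ⁅h, e⁆ = (2 : ℂ) • e) (hhf : ⁅h, f⁆ = (-2 : ℂ) • f) (hef : ⁅e, f⁆ = h)
    (l : Submodule ℂ L) (hl : l ≤ gEig h (-1))
    (hiso : ∀ x ∈ l, ∀ y ∈ l, killingForm ℂ L ⁅x, y⁆ e = 0) :
    ∀ y : L, ⁅f, y⁆ = 0 → ∀ z ∈ mSub e h l, killingForm ℂ L y z = 0 := by
  intro y hy z hz
  have hh0 : h ≠ 0 := by
    rintro rfl
    exact he (by simpa using hhe.symm)
  have t : IsSl2Triple h e f :=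
    { h_ne_zero := hh0
      lie_e_f := hef
      lie_h_e_nsmul := by rw [hhe, two_smul, two_smul]
      lie_h_f_nsmul := by rw [hhf, two_smul, neg_add]; module }
  have key : ∀ i : ℤ, i ≤ -1 → gEig h i ≤ LinearMap.ker (killingForm ℂ L y) := by
    intro i hi x hx
    have hx' : ⁅h, x⁆ = (i : ℂ) • x := by
      simpa [gEig, Module.End.mem_eigenspace_iff] using hx
    set K := LinearMap.ker (ad ℂ L f) with hKdef
    have hyK : y ∈ K := by simpa [K, LinearMap.mem_ker] using hy
    set A : L →ₗ[ℂ] L := ad ℂ L h + (i : ℂ) • LinearMap.id with hAdef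
    have hA : ∀ w, A w = ⁅h, w⁆ + (i : ℂ) • w := by
      intro w; simp [A]
    have hmap : ∀ w ∈ K, A w ∈ K := by
      intro w hw
      have hw' : ⁅f, w⁆ = 0 := hw
      have : ⁅f, A w⁆ = 0 := by
        have hfh : ⁅f, h⁆ = (2 : ℂ) • f := by
          rw [← lie_skew f h, hhf]; module
        rw [hA, lie_add, lie_smul, hw', smul_zero, add_zero, leibniz_lie, hw', lie_zero,
          add_zero, hfh, smul_lie, hw', smul_zero]
      exact this
    set S : K →ₗ[ℂ] K := A.restrict hmap with hSdef
    have hinj : Function.Injective S := by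
      rw [← LinearMap.ker_eq_bot, eq_bot_iff]
      rintro ⟨w, hwK⟩ hw0
      have hAw : A w = 0 := congrArg Subtype.val hw0
      simp only [Submodule.mem_bot, Submodule.mk_eq_zero]
      by_contra hw
      have hP : t.symm.HasPrimitiveVectorWith w (i : ℂ) :=
        { ne_zero := hw
          lie_h := by
            rw [hA] at hAw
            rw [neg_lie, eq_neg_of_add_eq_zero_left hAw, neg_neg]
          lie_e := hwK }
      obtain ⟨n, hn⟩ := hP.exists_nat
      have : i = (n : ℤ) := by exact_mod_cast hn
      omega
    obtain ⟨w, hw⟩ := (LinearMap.injective_iff_surjective.mp hinj) ⟨y, hyK⟩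
    have hAw : A (w : L) = y := congrArg Subtype.val hw
    have hmain : killingForm ℂ L (A (w : L)) x = 0 := by
      rw [hA, map_add, LinearMap.add_apply, map_smul, LinearMap.smul_apply]
      have h1 : killingForm ℂ L ⁅h, (w : L)⁆ x = - killingForm ℂ L (w : L) ⁅h, x⁆ :=
        LieModule.traceForm_apply_lie_apply' ℂ L L h (w : L) x
      rw [h1, hx', map_smul]
      simp
    rw [LinearMap.mem_ker, ← hAw]
    exact hmain
  have hle : mSub e h l ≤ LinearMap.ker (killingForm ℂ L y) := by
    refine sup_le (le_trans inf_le_left (key (-1) le_rfl)) ?_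
    exact iSup₂_le fun i hi => key i (le_trans hi (by norm_num))
  exact hle hz
end

section
/- For all x ∈ 𝔫_l and all y ∈ 𝔤 with ⁅f,y⁆ = 0, the element ⁅x, y + e⁆ lies in 𝔪_l^⊥; that is, κ(⁅x, y + e⁆, z) = 0 for every z ∈ 𝔪_l. -/
open LieAlgebra

variable {L : Type*} [LieRing L] [LieAlgebra ℂ L]

lemma gEig_le_gLe (h : L) {i k : ℤ} (hik : i ≤ k) : gEig h i ≤ gLe h k :=
  le_iSup₂ (f := fun i (_ : i ∈ Set.Iic k) => gEig h i) i hik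

lemma gLe_mono (h : L) {k k' : ℤ} (hk : k ≤ k') : gLe h k ≤ gLe h k' :=
  iSup₂_le fun i hi => gEig_le_gLe h (le_trans hi hk)

lemma mem_gEig_iff {h a : L} {i : ℤ} : a ∈ gEig h i ↔ ⁅h, a⁆ = (i : ℂ) • a := by
  rw [gEig, Module.End.mem_eigenspace_iff, ad_apply]

lemma lie_gEig_gEig {h a b : L} {i j : ℤ} (ha : a ∈ gEig h i) (hb : b ∈ gEig h j) :
    ⁅a, b⁆ ∈ gEig h (i + j) := by
  rw [mem_gEig_iff] at ha hb ⊢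
  rw [leibniz_lie, ha, hb, smul_lie, lie_smul]
  push_cast
  rw [add_smul]

lemma lie_gEig_gLe {h a b : L} {i q : ℤ} (ha : a ∈ gEig h i) (hb : b ∈ gLe h q) :
    ⁅a, b⁆ ∈ gLe h (i + q) := by
  have key : gLe h q ≤ (gLe h (i + q)).comap (ad ℂ L a) := by
    refine iSup₂_le fun j hj => fun c hc => Submodule.mem_comap.mpr ?_
    rw [ad_apply]
    exact gEig_le_gLe h (by simp only [Set.mem_Iic] at hj; omega) (lie_gEig_gEig ha hc)
  simpa [ad_apply] using key hb

lemma lie_gLe_gEig {h a b : L} {p j : ℤ} (ha : a ∈ gLe h p) (hb : b ∈ gEig h j) :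
    ⁅a, b⁆ ∈ gLe h (p + j) := by
  have h1 := neg_mem (lie_gEig_gLe hb ha)
  rw [lie_skew] at h1
  rwa [add_comm]

lemma lie_gLe_gLe {h a b : L} {p q : ℤ} (ha : a ∈ gLe h p) (hb : b ∈ gLe h q) :
    ⁅a, b⁆ ∈ gLe h (p + q) := by
  have key : gLe h p ≤ (gLe h (p + q)).comap (-(ad ℂ L b)) := by
    refine iSup₂_le fun i hi => fun c hc => Submodule.mem_comap.mpr ?_
    have h2 : ⁅c, b⁆ ∈ gLe h (p + q) :=
      gLe_mono h (by simp only [Set.mem_Iic] at hi; omega) (lie_gEig_gLe hc hb)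
    simpa only [LinearMap.neg_apply, ad_apply, lie_skew] using h2
  simpa only [Submodule.mem_comap, LinearMap.neg_apply, ad_apply, lie_skew] using key ha

lemma kEig {h a b : L} {p q : ℤ} (ha : a ∈ gEig h p) (hb : b ∈ gEig h q) (hpq : p + q ≠ 0) :
    killingForm ℂ L a b = 0 := by
  rw [mem_gEig_iff] at ha hb
  have h1 : killingForm ℂ L ⁅h, a⁆ b = - killingForm ℂ L a ⁅h, b⁆ :=
    LieModule.traceForm_apply_lie_apply' ℂ L L h a b
  rw [ha, hb, LinearMap.map_smul₂, map_smul, smul_eq_mul, smul_eq_mul] at h1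
  have hc : ((p + q : ℤ) : ℂ) ≠ 0 := Int.cast_ne_zero.mpr hpq
  have h2 : ((p + q : ℤ) : ℂ) * killingForm ℂ L a b = 0 := by
    push_cast
    linear_combination h1
  exact (mul_eq_zero.mp h2).resolve_left hc

lemma kEigLe {h a : L} {p q : ℤ} (ha : a ∈ gEig h p) (hpq : p + q < 0) {b : L}
    (hb : b ∈ gLe h q) : killingForm ℂ L a b = 0 := by
  have key : gLe h q ≤ LinearMap.ker (killingForm ℂ L a) := by
    refine iSup₂_le fun j hj => fun c hc => LinearMap.mem_ker.mpr ?_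
    exact kEig ha hc (by simp only [Set.mem_Iic] at hj; omega)
  exact key hb

lemma kLeLe {h : L} {p q : ℤ} (hpq : p + q < 0) {a b : L} (ha : a ∈ gLe h p)
    (hb : b ∈ gLe h q) : killingForm ℂ L a b = 0 := by
  have key : gLe h p ≤ LinearMap.ker ((killingForm ℂ L).flip b) := by
    refine iSup₂_le fun i hi => fun c hc => LinearMap.mem_ker.mpr ?_
    exact kEigLe hc (by simp only [Set.mem_Iic] at hi; omega) hb
  exact key ha

lemma lowest_nat {e h f : L} [Module.Finite ℂ L] (t : IsSl2Triple h e f) {v : L} {μ : ℂ}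
    (hv : v ≠ 0) (hfv : ⁅f, v⁆ = 0) (hhv : ⁅h, v⁆ = μ • v) : ∃ n : ℕ, μ = -(n : ℂ) := by
  have P : IsSl2Triple.HasPrimitiveVectorWith t.symm v (-μ) :=
    ⟨hv, by rw [neg_lie, hhv, neg_smul], hfv⟩
  obtain ⟨n, hn⟩ := P.exists_nat
  exact ⟨n, by rw [← hn, neg_neg]⟩

lemma kerf_perp {e h f : L} [Module.Finite ℂ L] (t : IsSl2Triple h e f)
    {y w : L} (hy : ⁅f, y⁆ = 0) {i : ℤ} (hi : i ≤ -2) (hw : w ∈ gEig h i) :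
    killingForm ℂ L y w = 0 := by
  classical
  set S : Submodule ℂ L := LinearMap.ker (ad ℂ L f) with hS
  have hySmem : y ∈ S := LinearMap.mem_ker.mpr (by rwa [ad_apply])
  have hstab : ∀ x ∈ S, (ad ℂ L h) x ∈ S := by
    intro x hx
    simp only [hS, LinearMap.mem_ker, ad_apply] at hx ⊢
    have : ⁅f, ⁅h, x⁆⁆ = ⁅⁅f, h⁆, x⁆ + ⁅h, ⁅f, x⁆⁆ := by rw [leibniz_lie]
    have hfh : ⁅f, h⁆ = (2 : ℂ) • f := by
      have h4 : (2 : ℂ) • f = 2 • f := by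
        rw [← Nat.cast_smul_eq_nsmul ℂ 2 f]; norm_num
      rw [← lie_skew, t.lie_h_f_nsmul, neg_neg, h4]
    rw [this, hx, lie_zero, add_zero, hfh, smul_lie, hx, smul_zero]
  set H : Module.End ℂ S := (ad ℂ L h).restrict hstab with hH
  have hcoe : ∀ s : S, (H s : L) = ⁅h, (s : L)⁆ := fun s => by
    rw [hH, LinearMap.restrict_coe_apply, ad_apply]
  have hw' : ⁅h, w⁆ = (i : ℂ) • w := mem_gEig_iff.mp hw
  -- κ(H^n s, w) = (-i)^n κ(s, w)
  have hpow : ∀ (n : ℕ) (s : S), killingForm ℂ L ((H ^ n) s : L) w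
      = (-(i : ℂ)) ^ n * killingForm ℂ L (s : L) w := by
    intro n
    induction n with
    | zero => intro s; simp
    | succ n ih =>
      intro s
      have h1 : (((H ^ (n + 1)) s : S) : L) = (((H ^ n) (H s) : S) : L) := by
        rw [pow_succ, Module.End.mul_apply]
      rw [h1, ih (H s), hcoe]
      have h2 : killingForm ℂ L ⁅h, (s : L)⁆ w
          = - killingForm ℂ L (s : L) ⁅h, w⁆ :=
        LieModule.traceForm_apply_lie_apply' ℂ L L h _ w
      rw [h2, hw', map_smul, smul_eq_mul, pow_succ]
      ring
  have haev : ∀ (q : Polynomial ℂ) (s : S), killingForm ℂ L ((Polynomial.aeval H q) s : L) w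
      = q.eval (-(i : ℂ)) * killingForm ℂ L (s : L) w := by
    intro q
    induction q using Polynomial.induction_on' with
    | add p q hp hq =>
      intro s
      rw [map_add, LinearMap.add_apply, Submodule.coe_add, map_add, LinearMap.add_apply, hp, hq,
        Polynomial.eval_add, add_mul]
    | monomial n c =>
      intro s
      rw [Polynomial.aeval_monomial, Polynomial.eval_monomial]
      have : ((algebraMap ℂ (Module.End ℂ S)) c * H ^ n) s = c • ((H ^ n) s) := by
        rw [Module.End.mul_apply, Module.algebraMap_end_apply]
      rw [this, Submodule.coe_smul, LinearMap.map_smul₂, smul_eq_mul, hpow]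
      ring
  have hmin := haev (minpoly ℂ H) ⟨y, hySmem⟩
  rw [minpoly.aeval] at hmin
  simp only [LinearMap.zero_apply, ZeroMemClass.coe_zero, LinearMap.map_zero₂] at hmin
  rcases eq_or_ne ((minpoly ℂ H).eval (-(i : ℂ))) 0 with hroot | hnroot
  · exfalso
    have heig : H.HasEigenvalue (-(i : ℂ)) := Module.End.hasEigenvalue_iff_isRoot.mpr hroot
    obtain ⟨v, hv⟩ := heig.exists_hasEigenvector
    have hvne : (v : L) ≠ 0 := fun hc => hv.right (by exact_mod_cast hc)
    have hvf : ⁅f, (v : L)⁆ = 0 := by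
      have h3 : (ad ℂ L f) (v : L) = 0 := v.2
      rwa [ad_apply] at h3
    have hvh : ⁅h, (v : L)⁆ = (-(i : ℂ)) • (v : L) := by
      have := hv.apply_eq_smul
      calc ⁅h, (v : L)⁆ = ((H v : S) : L) := (hcoe v).symm
        _ = (-(i : ℂ)) • (v : L) := by rw [this]; simp
    obtain ⟨n, hn⟩ := lowest_nat t hvne hvf hvh
    have : (i : ℂ) = (n : ℂ) := by linear_combination -hn
    have : i = (n : ℤ) := by exact_mod_cast this
    omega
  · rcases mul_eq_zero.mp hmin.symm with hc | hc
    · exact absurd hc hnroot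
    · exact hc

lemma kerf_perp_le {e h f : L} [Module.Finite ℂ L] (t : IsSl2Triple h e f)
    {y w : L} (hy : ⁅f, y⁆ = 0) (hw : w ∈ gLe h (-2)) :
    killingForm ℂ L y w = 0 := by
  have key : gLe h (-2) ≤ LinearMap.ker (killingForm ℂ L y) := by
    refine iSup₂_le fun i hi => fun c hc => LinearMap.mem_ker.mpr ?_
    exact kerf_perp t hy (by simpa using hi) hc
  exact key hw

/-- For `x ∈ 𝔫_l` and `y ∈ ker (ad f)`, the element `⁅x, y + e⁆` lies in
`𝔪_l^⊥`, i.e. `κ(⁅x, y + e⁆, z) = 0` for every `z ∈ 𝔪_l`. -/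
theorem stmt2 {L : Type*} [LieRing L] [LieAlgebra ℂ L]
    [Module.Finite ℂ L] [LieAlgebra.IsSemisimple ℂ L]
    (e h f : L) (he : e ≠ 0)
    (hhe : ⁅h, e⁆ = (2 : ℂ) • e) (hhf : ⁅h, f⁆ = (-2 : ℂ) • f) (hef : ⁅e, f⁆ = h)
    (l : Submodule ℂ L) (hl : l ≤ gEig h (-1))
    (hiso : ∀ x ∈ l, ∀ y ∈ l, killingForm ℂ L ⁅x, y⁆ e = 0) :
    ∀ x ∈ nSub h l, ∀ y : L, ⁅f, y⁆ = 0 →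
      ∀ z ∈ mSub e h l, killingForm ℂ L ⁅x, y + e⁆ z = 0 := by
  intro x hx y hy z hz
  have t : IsSl2Triple h e f := by
    refine ⟨?_, hef, ?_, ?_⟩
    · intro h0
      apply he
      have h1 := hhe
      rw [h0, zero_lie] at h1
      exact (smul_eq_zero.mp h1.symm).resolve_left (by norm_num)
    · rw [hhe, ← Nat.cast_smul_eq_nsmul ℂ 2 e]
      norm_num
    · rw [hhf, ← Nat.cast_smul_eq_nsmul ℂ 2 f, ← neg_smul]
      norm_num
  have he2 : e ∈ gEig h 2 := mem_gEig_iff.mpr (by rw [hhe]; norm_num)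
  have hxle : x ∈ gLe h (-1) :=
    (sup_le (le_trans hl (gEig_le_gLe h (by omega))) (gLe_mono h (by omega))) hx
  have hzle : z ∈ gLe h (-1) :=
    (sup_le (le_trans inf_le_left (gEig_le_gLe h (by omega))) (gLe_mono h (by omega))) hz
  rw [lie_add, map_add, LinearMap.add_apply]
  have hxz : ⁅x, z⁆ ∈ gLe h (-2) := by
    have := lie_gLe_gLe hxle hzle
    norm_num at this
    exact this
  have term1 : killingForm ℂ L ⁅x, y⁆ z = 0 := by
    rw [LieModule.traceForm_apply_lie_apply' ℂ L L x y z,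
      kerf_perp_le t hy hxz, neg_zero]
  obtain ⟨x1, hx1, x2, hx2, rfl⟩ := Submodule.mem_sup.mp hx
  obtain ⟨z1, hz1, z2, hz2, rfl⟩ := Submodule.mem_sup.mp hz
  have hz1e : z1 ∈ gEig h (-1) := hz1.1
  have hk0 : killingForm ℂ L ⁅x1, z1⁆ e = 0 := by
    have hzker := (Submodule.mem_iInf _).mp ((Submodule.mem_iInf _).mp hz1.2 x1) hx1
    simpa [LinearMap.mem_ker, ad_apply] using hzker
  have a1 : killingForm ℂ L ⁅x1, e⁆ z1 = 0 := by
    rw [LieModule.traceForm_apply_lie_apply ℂ L L x1 e z1, ← lie_skew e z1, map_neg,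
      ← LieModule.traceForm_apply_lie_apply ℂ L L x1 z1 e, hk0, neg_zero]
  have hx1e : ⁅x1, e⁆ ∈ gEig h (-1 + 2) := lie_gEig_gEig (hl hx1) he2
  have a2 : killingForm ℂ L ⁅x1, e⁆ z2 = 0 := kEigLe hx1e (by omega) hz2
  have hx2e : ⁅x2, e⁆ ∈ gLe h (-2 + 2) := lie_gLe_gEig hx2 he2
  have a3 : killingForm ℂ L ⁅x2, e⁆ z1 = 0 :=
    kLeLe (by omega) hx2e (gEig_le_gLe h (le_refl (-1)) hz1e)
  have a4 : killingForm ℂ L ⁅x2, e⁆ z2 = 0 := kLeLe (by omega) hx2e hz2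
  have term2 : killingForm ℂ L ⁅x1 + x2, e⁆ (z1 + z2) = 0 := by
    simp only [add_lie, map_add, LinearMap.add_apply, a1, a2, a3, a4, add_zero, zero_add]
  rw [term1, term2, add_zero]
end

section
/- The linear functional χ on 𝔤 defined by χ(x) = κ(e,x) vanishes on all brackets of elements of 𝔫_l: κ(e, ⁅x,y⁆) = 0 for all x, y ∈ 𝔫_l. -/
open LieAlgebra

variable {L : Type*} [LieRing L] [LieAlgebra ℂ L]

/-- κ(e, z) = 0 when z is an eigenvector of ad h with eigenvalue ≠ -2. -/
lemma killing_e_eq_zero {L : Type*} [LieRing L] [LieAlgebra ℂ L]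
    [Module.Finite ℂ L] (e h : L) (hhe : ⁅h, e⁆ = (2 : ℂ) • e)
    (c : ℂ) (hc : c ≠ -2) (z : L) (hz : ⁅h, z⁆ = c • z) :
    killingForm ℂ L e z = 0 := by
  have h1 := LieModule.traceForm_apply_lie_apply' ℂ L L h e z
  rw [hhe, hz, map_smul, map_smul, LinearMap.smul_apply] at h1
  have h2 : (2 + c) * killingForm ℂ L e z = 0 := by
    have := h1
    simp only [smul_eq_mul] at this
    linear_combination this
  rcases mul_eq_zero.mp h2 with h3 | h3
  · exact absurd (by linear_combination h3 : c = -2) hc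
  · exact h3

/-- κ(e, ⁅x, y⁆) = 0 when x, y are eigenvectors whose eigenvalues don't sum to -2. -/
lemma killing_e_lie_eq_zero {L : Type*} [LieRing L] [LieAlgebra ℂ L]
    [Module.Finite ℂ L] (e h : L) (hhe : ⁅h, e⁆ = (2 : ℂ) • e)
    (i j : ℤ) (hij : i + j ≠ -2) (x : L) (hx : x ∈ gEig h i)
    (y : L) (hy : y ∈ gEig h j) :
    killingForm ℂ L e ⁅x, y⁆ = 0 := by
  have hx' : ⁅h, x⁆ = (i : ℂ) • x := by
    simpa [gEig, Module.End.mem_eigenspace_iff, ad_apply] using hx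
  have hy' : ⁅h, y⁆ = (j : ℂ) • y := by
    simpa [gEig, Module.End.mem_eigenspace_iff, ad_apply] using hy
  have hz : ⁅h, ⁅x, y⁆⁆ = ((i : ℂ) + j) • ⁅x, y⁆ := by
    rw [leibniz_lie, hx', hy', add_smul, smul_lie, lie_smul]
  refine killing_e_eq_zero e h hhe _ ?_ _ hz
  intro hcontra
  apply hij
  have : ((i + j : ℤ) : ℂ) = ((-2 : ℤ) : ℂ) := by push_cast; simpa using hcontra
  exact_mod_cast this

/-- The functional `χ(x) = κ(e, x)` vanishes on all brackets of
elements of `𝔫_l`. -/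
theorem stmt4 {L : Type*} [LieRing L] [LieAlgebra ℂ L]
    [Module.Finite ℂ L] [LieAlgebra.IsSemisimple ℂ L]
    (e h f : L) (he : e ≠ 0)
    (hhe : ⁅h, e⁆ = (2 : ℂ) • e) (hhf : ⁅h, f⁆ = (-2 : ℂ) • f) (hef : ⁅e, f⁆ = h)
    (l : Submodule ℂ L) (hl : l ≤ gEig h (-1))
    (hiso : ∀ x ∈ l, ∀ y ∈ l, killingForm ℂ L ⁅x, y⁆ e = 0) :
    ∀ x ∈ nSub h l, ∀ y ∈ nSub h l, killingForm ℂ L e ⁅x, y⁆ = 0 := by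
  -- the bilinear map (x, y) ↦ κ(e, ⁅x, y⁆)
  set ψ : L →ₗ[ℂ] L →ₗ[ℂ] ℂ :=
    (LinearMap.llcomp ℂ L L ℂ (killingForm ℂ L e)).comp (ad ℂ L : L →ₗ[ℂ] Module.End ℂ L)
    with hψ
  have hψapp : ∀ x y : L, ψ x y = killingForm ℂ L e ⁅x, y⁆ := fun x y => rfl
  -- vanishing cases
  have case_ll : ∀ x ∈ l, ∀ y ∈ l, ψ x y = 0 := by
    intro x hx y hy
    rw [hψapp, ← LieModule.traceForm_comm ℂ L L]
    exact hiso x hx y hy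
  have case_eig : ∀ (i j : ℤ), i + j ≠ -2 → ∀ x ∈ gEig h i, ∀ y ∈ gEig h j, ψ x y = 0 := by
    intro i j hij x hx y hy
    rw [hψapp]
    exact killing_e_lie_eq_zero e h hhe i j hij x hx y hy
  -- if x is a (-1) or (≤ -2)-eigenvector side, gLe(-2) ≤ ker (ψ x)
  have le_ker : ∀ (i : ℤ), ∀ x ∈ gEig h i, (∀ j : ℤ, j ≤ -2 → i + j ≠ -2) →
      gLe h (-2) ≤ LinearMap.ker (ψ x) := by
    intro i x hx hi
    refine iSup₂_le fun j hj => fun y hy => ?_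
    exact LinearMap.mem_ker.mpr (case_eig i j (hi j hj) x hx y hy)
  have case_lg : ∀ x ∈ l, ∀ y ∈ gLe h (-2), ψ x y = 0 := by
    intro x hx y hy
    exact le_ker (-1) x (hl hx) (by intro j hj; omega) hy
  have case_gl : ∀ x ∈ gLe h (-2), ∀ y ∈ l, ψ x y = 0 := by
    intro x hx y hy
    have : gLe h (-2) ≤ LinearMap.ker (ψ.flip y) := by
      refine iSup₂_le fun i hi => fun z hz => ?_
      exact LinearMap.mem_ker.mpr (case_eig i (-1) (by have := Set.mem_Iic.mp hi; omega) z hz y (hl hy))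
    exact this hx
  have case_gg : ∀ x ∈ gLe h (-2), ∀ y ∈ gLe h (-2), ψ x y = 0 := by
    intro x hx y hy
    have : gLe h (-2) ≤ LinearMap.ker (ψ.flip y) := by
      refine iSup₂_le fun i hi => fun z hz => ?_
      refine LinearMap.mem_ker.mpr ?_
      have : gLe h (-2) ≤ LinearMap.ker (ψ z) := by
        refine iSup₂_le fun j hj => fun w hw => ?_
        exact LinearMap.mem_ker.mpr (case_eig i j (by have := Set.mem_Iic.mp hi; have := Set.mem_Iic.mp hj; omega) z hz w hw)
      exact this hy
    exact this hx
  -- combine via sup decomposition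
  intro x hx y hy
  rw [← hψapp]
  rcases Submodule.mem_sup.mp hx with ⟨a, ha, b, hb, rfl⟩
  rcases Submodule.mem_sup.mp hy with ⟨c, hc, d, hd, rfl⟩
  simp only [map_add, LinearMap.add_apply]
  rw [case_ll a ha c hc, case_lg a ha d hd, case_gl b hb c hc, case_gg b hb d hd]
  ring
end

section
/- For z', z ∈ V and v = z'⊗e₂ + z⊗e₁ ∈ V ⊗ ℂ², the following are equivalent: (a) ω(v, (A⊗id)(v)) = 0 for every A ∈ 𝔟 and ω(v, (id⊗B)(v)) = 0 for every B ∈ 𝔟₂; (b) ⟨z',z'⟩ = 0, ⟨z,z'⟩ = 0, and ⟨Az, z'⟩ = ⟨z, Az'⟩ for every A ∈ 𝔟. -/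
open TensorProduct

/-- For `v = z' ⊗ e₂ + z ⊗ e₁ ∈ V ⊗ ℂ²`, vanishing of `ω(v, (A⊗id)v)` for all
`A ∈ 𝔟` and of `ω(v, (id⊗B)v)` for all upper-triangular traceless `B` is equivalent to
`⟨z',z'⟩ = 0`, `⟨z,z'⟩ = 0` and `⟨Az, z'⟩ = ⟨z, Az'⟩` for all `A ∈ 𝔟`. -/
theorem stmt9 {V : Type*} [AddCommGroup V] [Module ℂ V] [FiniteDimensional ℂ V]
    (B : LinearMap.BilinForm ℂ V)
    (hBsymm : ∀ v w : V, B v w = B w v)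
    (hBnd : ∀ v : V, (∀ w : V, B v w = 0) → v = 0)
    (ω : LinearMap.BilinForm ℂ (V ⊗[ℂ] (Fin 2 → ℂ)))
    (hω : ∀ (v w : V) (a b : Fin 2 → ℂ),
      ω (v ⊗ₜ[ℂ] a) (w ⊗ₜ[ℂ] b) = B v w * (a 0 * b 1 - a 1 * b 0))
    (𝔟 : Set (V →ₗ[ℂ] V))
    (h𝔟 : ∀ A ∈ 𝔟, ∀ v w : V, B (A v) w + B v (A w) = 0)
    (z' z : V) (v : V ⊗[ℂ] (Fin 2 → ℂ))
    (hv : v = z' ⊗ₜ[ℂ] (Pi.single 1 1) + z ⊗ₜ[ℂ] (Pi.single 0 1)) :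
    ((∀ A ∈ 𝔟, ω v (TensorProduct.map A LinearMap.id v) = 0) ∧
     (∀ M : Matrix (Fin 2) (Fin 2) ℂ, M 1 0 = 0 → M 0 0 + M 1 1 = 0 →
        ω v (TensorProduct.map LinearMap.id (Matrix.toLin' M) v) = 0)) ↔
    (B z' z' = 0 ∧ B z z' = 0 ∧ ∀ A ∈ 𝔟, B (A z) z' = B z (A z')) := by
  subst hv
  have hsingle : ∀ (i j : Fin 2), (Pi.single j (1:ℂ) : Fin 2 → ℂ) i = if i = j then (1:ℂ) else 0 := by
    intro i j; rw [Pi.single_apply]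
  have e1 : ∀ (A : V →ₗ[ℂ] V),
      ω (z' ⊗ₜ[ℂ] (Pi.single 1 1) + z ⊗ₜ[ℂ] (Pi.single 0 1))
        (TensorProduct.map A LinearMap.id
          (z' ⊗ₜ[ℂ] (Pi.single 1 1) + z ⊗ₜ[ℂ] (Pi.single 0 1)))
        = B z (A z') - B z' (A z) := by
    intro A
    simp only [map_add, TensorProduct.map_tmul, LinearMap.id_apply, LinearMap.add_apply, hω,
      hsingle]
    norm_num
    ring
  have hM : ∀ (M : Matrix (Fin 2) (Fin 2) ℂ) (j : Fin 2),
      Matrix.toLin' M (Pi.single j 1) = M 0 j • (Pi.single 0 1 : Fin 2 → ℂ) + M 1 j • (Pi.single 1 1 : Fin 2 → ℂ) := by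
    intro M j
    funext i
    fin_cases i <;> fin_cases j <;>
      simp [Matrix.toLin'_apply, Matrix.mulVec, dotProduct, Fin.sum_univ_two,
        Pi.single_apply]
  have e2 : ∀ (M : Matrix (Fin 2) (Fin 2) ℂ),
      ω (z' ⊗ₜ[ℂ] (Pi.single 1 1) + z ⊗ₜ[ℂ] (Pi.single 0 1))
        (TensorProduct.map LinearMap.id (Matrix.toLin' M)
          (z' ⊗ₜ[ℂ] (Pi.single 1 1) + z ⊗ₜ[ℂ] (Pi.single 0 1)))
        = -(M 0 1) * B z' z' - M 0 0 * B z' z + M 1 1 * B z z' + M 1 0 * B z z := by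
    intro M
    simp only [map_add, TensorProduct.map_tmul, LinearMap.id_apply, hM, tmul_add, tmul_smul,
      map_smul, LinearMap.add_apply, LinearMap.smul_apply, smul_eq_mul, hω, hsingle]
    norm_num
    ring
  constructor
  · rintro ⟨h1, h2⟩
    have hzz' : B z' z' = 0 := by
      have := h2 !![0, 1; 0, 0] (by norm_num) (by norm_num)
      rw [e2] at this
      simp at this
      linear_combination this
    have hz : B z z' = 0 := by
      have := h2 !![1, 0; 0, -1] (by norm_num) (by norm_num)
      rw [e2] at this
      simp at this
      have hs := hBsymm z' z
      linear_combination (-this - hs)/2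
    refine ⟨hzz', hz, fun A hA => ?_⟩
    have := h1 A hA
    rw [e1] at this
    rw [hBsymm (A z) z']
    linear_combination -this
  · rintro ⟨hzz', hz, h3⟩
    constructor
    · intro A hA
      rw [e1]
      have := h3 A hA
      rw [hBsymm (A z) z'] at this
      linear_combination -this
    · intro M hM10 htr
      rw [e2, hM10, hBsymm z' z, hz]
      linear_combination hzz' * (-(M 0 1))
end

section
/- In 𝔤₂, the subspace 𝔫 = span(E₂₁, E₃₁, f₁, e₂) is a nilpotent Lie subalgebra; the subspace 𝔰 = span(E₂₃, E₂₂ − E₃₃) is a Lie subalgebra satisfying ⁅𝔰, 𝔫⁆ ⊆ 𝔫; and the linear functional χ on 𝔤₂ defined by χ(x) = κ(e₁, x), where κ is the Killing form of 𝔤₂, vanishes on ⁅𝔫, 𝔫⁆ and on ⁅𝔰, 𝔫⁆. -/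
open Matrix

private lemma brkt_span {L : Type*} [LieRing L] [LieAlgebra ℂ L] {s t : Set L}
    {W : Submodule ℂ L} (h : ∀ x ∈ s, ∀ y ∈ t, ⁅x, y⁆ ∈ W) :
    ∀ x ∈ Submodule.span ℂ s, ∀ y ∈ Submodule.span ℂ t, ⁅x, y⁆ ∈ W := by
  intro x hx
  induction hx using Submodule.span_induction with
  | mem x hxs =>
      intro y hy
      induction hy using Submodule.span_induction with
      | mem y hyt => exact h _ hxs _ hyt
      | zero => simp
      | add y z _ _ hy hz => rw [lie_add]; exact W.add_mem hy hz
      | smul a y _ hy => rw [lie_smul]; exact W.smul_mem a hy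
  | zero => intro y hy; simp
  | add x z _ _ hx hz => intro y hy; rw [add_lie]; exact W.add_mem (hx y hy) (hz y hy)
  | smul a x _ hx => intro y hy; rw [smul_lie]; exact W.smul_mem a (hx y hy)

private lemma trace_zero_of_proj {L : Type*} [AddCommGroup L] [Module ℂ L] [Module.Finite ℂ L]
    (P Q R φ : Module.End ℂ L) (hsum : P + Q + R = 1)
    (hP : P * (φ * P) = 0) (hQ : Q * (φ * Q) = 0) (hR : R * (φ * R) = 0) :
    LinearMap.trace ℂ L φ = 0 := by
  have key : ∀ A : Module.End ℂ L, A * (φ * A) = 0 → LinearMap.trace ℂ L (φ * A) = 0 := by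
    intro A hA
    have h2 : IsNilpotent (φ * A) := ⟨2, by rw [sq, mul_assoc, hA, mul_zero]⟩
    exact (LinearMap.isNilpotent_trace_of_isNilpotent h2).eq_zero
  calc LinearMap.trace ℂ L φ = LinearMap.trace ℂ L (φ * P + φ * Q + φ * R) := by
        rw [← mul_add, ← mul_add, hsum, mul_one]
    _ = 0 := by rw [map_add, map_add, key P hP, key Q hQ, key R hR, add_zero, add_zero]


set_option maxHeartbeats 1000000

/- **Context for 𝔤₂ via its defining decomposition.** `L` is a complex Lie algebra equipped
with linear maps `ιV, ιVt : ℂ³ → L` (columns / rows) and `ιM : Matrix → L` such that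
`(v, x, u) ↦ ιV v + ιM x + ιVt u` is a bijection of `V ⊕ 𝔰𝔩₃(ℂ) ⊕ Vᵗ` onto `L` and the bracket
of `L` is the 𝔤₂-bracket: the matrix commutator on `𝔰𝔩₃`, together with `[x,v] = xv`,
`[x,vᵗ] = -vᵗx`, `[v,w] = 2(v×w)ᵗ`, `[vᵗ,wᵗ] = 2(v×w)`, `[v,wᵗ] = -3vwᵗ + (wᵗv)·Id`. -/
/-- In `𝔤₂`, `𝔫 = span(E₂₁, E₃₁, f₁, e₂)` is a nilpotent Lie subalgebra,
`𝔰 = span(E₂₃, E₂₂ - E₃₃)` is a Lie subalgebra with `⁅𝔰, 𝔫⁆ ⊆ 𝔫`, and `χ(x) = κ(e₁, x)`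
vanishes on `⁅𝔫, 𝔫⁆` and on `⁅𝔰, 𝔫⁆`. -/
theorem stmt12 {L : Type*} [LieRing L] [LieAlgebra ℂ L] [Module.Finite ℂ L]
    (ιV ιVt : (Fin 3 → ℂ) →ₗ[ℂ] L) (ιM : Matrix (Fin 3) (Fin 3) ℂ →ₗ[ℂ] L)
    (hbij : Function.Bijective
      (fun p : (Fin 3 → ℂ) × {x : Matrix (Fin 3) (Fin 3) ℂ // x.trace = 0} × (Fin 3 → ℂ) =>
        ιV p.1 + ιM p.2.1.val + ιVt p.2.2))
    (hMM : ∀ x y : Matrix (Fin 3) (Fin 3) ℂ, x.trace = 0 → y.trace = 0 →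
      ⁅ιM x, ιM y⁆ = ιM (x * y - y * x))
    (hMV : ∀ x : Matrix (Fin 3) (Fin 3) ℂ, x.trace = 0 → ∀ v : Fin 3 → ℂ,
      ⁅ιM x, ιV v⁆ = ιV (x.mulVec v))
    (hMVt : ∀ x : Matrix (Fin 3) (Fin 3) ℂ, x.trace = 0 → ∀ u : Fin 3 → ℂ,
      ⁅ιM x, ιVt u⁆ = ιVt (-(u ᵥ* x)))
    (hVV : ∀ v w : Fin 3 → ℂ, ⁅ιV v, ιV w⁆ = ιVt ((2 : ℂ) • crossProduct v w))
    (hVtVt : ∀ u w : Fin 3 → ℂ, ⁅ιVt u, ιVt w⁆ = ιV ((2 : ℂ) • crossProduct u w))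
    (hVVt : ∀ (v u : Fin 3 → ℂ),
      ⁅ιV v, ιVt u⁆ = ιM (-(3 : ℂ) • vecMulVec v u + (u ⬝ᵥ v) • (1 : Matrix (Fin 3) (Fin 3) ℂ)))
    (N S : Submodule ℂ L)
    (hN : N = Submodule.span ℂ {ιM (Matrix.single 1 0 1), ιM (Matrix.single 2 0 1),
      ιVt (Pi.single 0 1), ιV (Pi.single 1 1)})
    (hS : S = Submodule.span ℂ {ιM (Matrix.single 1 2 1),
      ιM (Matrix.single 1 1 1 - Matrix.single 2 2 1)}) :
    (∃ K : LieSubalgebra ℂ L, K.toSubmodule = N ∧ LieRing.IsNilpotent K) ∧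
    (∃ K : LieSubalgebra ℂ L, K.toSubmodule = S) ∧
    (∀ s ∈ S, ∀ n ∈ N, ⁅s, n⁆ ∈ N) ∧
    (∀ x ∈ N, ∀ y ∈ N, killingForm ℂ L (ιV (Pi.single 0 1)) ⁅x, y⁆ = 0) ∧
    (∀ s ∈ S, ∀ n ∈ N, killingForm ℂ L (ιV (Pi.single 0 1)) ⁅s, n⁆ = 0) := by
  subst hN hS
  -- ### shorthand for the matrices and vectors involved
  set m1 : Matrix (Fin 3) (Fin 3) ℂ := Matrix.single 1 0 1 with hm1def
  set m2 : Matrix (Fin 3) (Fin 3) ℂ := Matrix.single 2 0 1 with hm2def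
  set m3 : Matrix (Fin 3) (Fin 3) ℂ := Matrix.single 1 2 1 with hm3def
  set m4 : Matrix (Fin 3) (Fin 3) ℂ := Matrix.single 1 1 1 - Matrix.single 2 2 1 with hm4def
  set e2v : Fin 3 → ℂ := Pi.single 1 1 with he2def
  set f1v : Fin 3 → ℂ := Pi.single 0 1 with hf1def
  -- ### traces
  have tm1 : m1.trace = 0 := Matrix.trace_single_eq_of_ne 1 0 1 (by decide)
  have tm2 : m2.trace = 0 := Matrix.trace_single_eq_of_ne 2 0 1 (by decide)
  have tm3 : m3.trace = 0 := Matrix.trace_single_eq_of_ne 1 2 1 (by decide)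
  have tm4 : m4.trace = 0 := by
    rw [hm4def, trace_sub]
    simp [Matrix.trace, Matrix.diag, Fin.sum_univ_three, Matrix.single, Matrix.of_apply]
  have traceAux : ∀ v u : Fin 3 → ℂ,
      (-(3 : ℂ) • vecMulVec v u + (u ⬝ᵥ v) • (1 : Matrix (Fin 3) (Fin 3) ℂ)).trace = 0 := by
    intro v u
    rw [trace_add, trace_smul, trace_smul, trace_one]
    have h : (vecMulVec v u).trace = u ⬝ᵥ v := by
      simp [Matrix.trace, Matrix.diag, vecMulVec_apply, dotProduct, Fin.sum_univ_three, mul_comm]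
    rw [h]
    simp [Fintype.card_fin]
    ring
  -- ### concrete matrix computations
  have cm1m2 : m1 * m2 - m2 * m1 = 0 := by
    rw [hm1def, hm2def]; ext i j
    fin_cases i <;> fin_cases j <;>
      simp [Matrix.mul_apply, Matrix.single, Matrix.of_apply, Fin.sum_univ_three]
  have cm3m2 : m3 * m2 - m2 * m3 = m1 := by
    rw [hm1def, hm2def, hm3def]; ext i j
    fin_cases i <;> fin_cases j <;>
      simp [Matrix.mul_apply, Matrix.single, Matrix.of_apply, Fin.sum_univ_three]
  have cm3m1 : m3 * m1 - m1 * m3 = 0 := by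
    rw [hm1def, hm3def]; ext i j
    fin_cases i <;> fin_cases j <;>
      simp [Matrix.mul_apply, Matrix.single, Matrix.of_apply, Fin.sum_univ_three]
  have cm4m1 : m4 * m1 - m1 * m4 = m1 := by
    rw [hm1def, hm4def]; ext i j
    fin_cases i <;> fin_cases j <;>
      simp [Matrix.mul_apply, Matrix.single, Matrix.of_apply, Fin.sum_univ_three]
  have cm4m2 : m4 * m2 - m2 * m4 = -m2 := by
    rw [hm2def, hm4def]; ext i j
    fin_cases i <;> fin_cases j <;>
      simp [Matrix.mul_apply, Matrix.single, Matrix.of_apply, Fin.sum_univ_three]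
  have cm3m4 : m3 * m4 - m4 * m3 = (-2 : ℂ) • m3 := by
    rw [hm3def, hm4def]; ext i j
    fin_cases i <;> fin_cases j <;>
      simp [Matrix.mul_apply, Matrix.single, Matrix.of_apply, Fin.sum_univ_three] <;>
      norm_num
  have cm1e2 : m1.mulVec e2v = 0 := by
    rw [hm1def, he2def]; funext i
    fin_cases i <;>
      simp [Matrix.mulVec, dotProduct, Matrix.single, Matrix.of_apply, Fin.sum_univ_three,
        Pi.single_apply]
  have cm2e2 : m2.mulVec e2v = 0 := by
    rw [hm2def, he2def]; funext i
    fin_cases i <;>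
      simp [Matrix.mulVec, dotProduct, Matrix.single, Matrix.of_apply, Fin.sum_univ_three,
        Pi.single_apply]
  have cm3e2 : m3.mulVec e2v = 0 := by
    rw [hm3def, he2def]; funext i
    fin_cases i <;>
      simp [Matrix.mulVec, dotProduct, Matrix.single, Matrix.of_apply, Fin.sum_univ_three,
        Pi.single_apply]
  have cm4e2 : m4.mulVec e2v = e2v := by
    rw [hm4def, he2def]; funext i
    fin_cases i <;>
      simp [Matrix.mulVec, dotProduct, Matrix.single, Matrix.of_apply, Fin.sum_univ_three,
        Pi.single_apply]
  have cf1m1 : f1v ᵥ* m1 = 0 := by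
    rw [hm1def, hf1def]; funext j
    fin_cases j <;>
      simp [Matrix.vecMul, dotProduct, Matrix.single, Matrix.of_apply, Fin.sum_univ_three,
        Pi.single_apply]
  have cf1m2 : f1v ᵥ* m2 = 0 := by
    rw [hm2def, hf1def]; funext j
    fin_cases j <;>
      simp [Matrix.vecMul, dotProduct, Matrix.single, Matrix.of_apply, Fin.sum_univ_three,
        Pi.single_apply]
  have cf1m3 : f1v ᵥ* m3 = 0 := by
    rw [hm3def, hf1def]; funext j
    fin_cases j <;>
      simp [Matrix.vecMul, dotProduct, Matrix.single, Matrix.of_apply, Fin.sum_univ_three,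
        Pi.single_apply]
  have cf1m4 : f1v ᵥ* m4 = 0 := by
    rw [hm4def, hf1def]; funext j
    fin_cases j <;>
      simp [Matrix.vecMul, dotProduct, Matrix.single, Matrix.of_apply, Fin.sum_univ_three,
        Pi.single_apply]
  have cvmv : vecMulVec e2v f1v = m1 := by
    rw [hm1def, he2def, hf1def]; ext i j
    fin_cases i <;> fin_cases j <;>
      simp [vecMulVec_apply, Matrix.single, Matrix.of_apply, Pi.single_apply]
  have cdot : f1v ⬝ᵥ e2v = 0 := by
    rw [he2def, hf1def]
    simp [dotProduct, Fin.sum_univ_three, Pi.single_apply]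
  -- ### the decomposition of L : projections P, Q, R
  set J : Submodule ℂ (Matrix (Fin 3) (Fin 3) ℂ) :=
    LinearMap.ker (traceLinearMap (Fin 3) ℂ ℂ) with hJ
  have hJmem : ∀ x : Matrix (Fin 3) (Fin 3) ℂ, x ∈ J ↔ x.trace = 0 := fun x => by
    simp [hJ, LinearMap.mem_ker]
  let G : ((Fin 3 → ℂ) × J × (Fin 3 → ℂ)) →ₗ[ℂ] L :=
    ιV ∘ₗ LinearMap.fst ℂ _ _
      + (ιM ∘ₗ J.subtype ∘ₗ LinearMap.fst ℂ _ _ ∘ₗ LinearMap.snd ℂ _ _)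
      + (ιVt ∘ₗ LinearMap.snd ℂ _ _ ∘ₗ LinearMap.snd ℂ _ _)
  have hG : Function.Bijective G := by
    have h0 : (fun p : (Fin 3 → ℂ) × {x : Matrix (Fin 3) (Fin 3) ℂ // x.trace = 0} × (Fin 3 → ℂ) =>
        ιV p.1 + ιM p.2.1.val + ιVt p.2.2) = (G : _ → L) ∘
        ((Equiv.refl (Fin 3 → ℂ)).prodCongr
          (((Equiv.subtypeEquivRight fun x => (hJmem x).symm)).prodCongr
            (Equiv.refl (Fin 3 → ℂ)))) := rfl
    rw [h0] at hbij
    exact (Function.Bijective.of_comp_iff _ (Equiv.bijective _)).mp hbij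
  let E := LinearEquiv.ofBijective G hG
  let P : Module.End ℂ L := ιV ∘ₗ LinearMap.fst ℂ _ _ ∘ₗ E.symm.toLinearMap
  let Q : Module.End ℂ L :=
    (ιM ∘ₗ J.subtype ∘ₗ LinearMap.fst ℂ _ _ ∘ₗ LinearMap.snd ℂ _ _) ∘ₗ E.symm.toLinearMap
  let R : Module.End ℂ L :=
    (ιVt ∘ₗ LinearMap.snd ℂ _ _ ∘ₗ LinearMap.snd ℂ _ _) ∘ₗ E.symm.toLinearMap
  have hsum : P + Q + R = 1 := by
    ext x
    show ιV (E.symm x).1 + ιM ((E.symm x).2.1 : Matrix (Fin 3) (Fin 3) ℂ) + ιVt (E.symm x).2.2 = x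
    exact E.apply_symm_apply x
  have hsymmV : ∀ v, E.symm (ιV v) = (v, 0, 0) := by
    intro v
    rw [LinearEquiv.symm_apply_eq]
    show ιV v = ιV v + ιM ((0 : J) : Matrix (Fin 3) (Fin 3) ℂ) + ιVt 0
    simp
  have hsymmM : ∀ (m : Matrix (Fin 3) (Fin 3) ℂ) (hm : m ∈ J),
      E.symm (ιM m) = (0, ⟨m, hm⟩, 0) := by
    intro m hm
    rw [LinearEquiv.symm_apply_eq]
    show ιM m = ιV 0 + ιM m + ιVt 0
    simp
  have hsymmVt : ∀ u, E.symm (ιVt u) = (0, 0, u) := by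
    intro u
    rw [LinearEquiv.symm_apply_eq]
    show ιVt u = ιV 0 + ιM ((0 : J) : Matrix (Fin 3) (Fin 3) ℂ) + ιVt u
    simp
  have hPM : ∀ m, m ∈ J → P (ιM m) = 0 := fun m hm => by
    show ιV (E.symm (ιM m)).1 = 0; rw [hsymmM m hm]; simp
  have hRM : ∀ m, m ∈ J → R (ιM m) = 0 := fun m hm => by
    show ιVt (E.symm (ιM m)).2.2 = 0; rw [hsymmM m hm]; simp
  have hQV : ∀ v, Q (ιV v) = 0 := fun v => by
    show ιM ((E.symm (ιV v)).2.1 : Matrix (Fin 3) (Fin 3) ℂ) = 0; rw [hsymmV]; simp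
  have hRV : ∀ v, R (ιV v) = 0 := fun v => by
    show ιVt (E.symm (ιV v)).2.2 = 0; rw [hsymmV]; simp
  have hPVt : ∀ u, P (ιVt u) = 0 := fun u => by
    show ιV (E.symm (ιVt u)).1 = 0; rw [hsymmVt]; simp
  have hQVt : ∀ u, Q (ιVt u) = 0 := fun u => by
    show ιM ((E.symm (ιVt u)).2.1 : Matrix (Fin 3) (Fin 3) ℂ) = 0; rw [hsymmVt]; simp
  -- ### vanishing of the Killing form on V × V and V × 𝔰𝔩₃
  have kVM : ∀ (v : Fin 3 → ℂ) (m : Matrix (Fin 3) (Fin 3) ℂ), m.trace = 0 →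
      killingForm ℂ L (ιV v) (ιM m) = 0 := by
    intro v m hm
    rw [LieModule.traceForm_apply_apply, ← Module.End.mul_eq_comp]
    apply trace_zero_of_proj P Q R _ hsum
    · ext x
      simp only [Module.End.mul_apply, LinearMap.zero_apply, LieModule.toEnd_apply_apply]
      have hx : P x = ιV ((E.symm x).1) := rfl
      rw [hx, hMV m hm, hVV, hPVt]
    · ext x
      simp only [Module.End.mul_apply, LinearMap.zero_apply, LieModule.toEnd_apply_apply]
      have hx : Q x = ιM (((E.symm x).2.1 : Matrix (Fin 3) (Fin 3) ℂ)) := rfl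
      have htb : ((E.symm x).2.1 : Matrix (Fin 3) (Fin 3) ℂ).trace = 0 :=
        (hJmem _).mp (E.symm x).2.1.2
      have hc : (m * ((E.symm x).2.1 : Matrix (Fin 3) (Fin 3) ℂ)
          - ((E.symm x).2.1 : Matrix (Fin 3) (Fin 3) ℂ) * m).trace = 0 := by
        rw [trace_sub, trace_mul_comm, sub_self]
      rw [hx, hMM m _ hm htb, ← lie_skew, hMV _ hc, map_neg, hQV, neg_zero]
    · ext x
      simp only [Module.End.mul_apply, LinearMap.zero_apply, LieModule.toEnd_apply_apply]
      have hx : R x = ιVt ((E.symm x).2.2) := rfl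
      rw [hx, hMVt m hm, hVVt, hRM _ ((hJmem _).mpr (traceAux _ _))]
  have kVV : ∀ v w : Fin 3 → ℂ, killingForm ℂ L (ιV v) (ιV w) = 0 := by
    intro v w
    rw [LieModule.traceForm_apply_apply, ← Module.End.mul_eq_comp]
    apply trace_zero_of_proj P Q R _ hsum
    · ext x
      simp only [Module.End.mul_apply, LinearMap.zero_apply, LieModule.toEnd_apply_apply]
      have hx : P x = ιV ((E.symm x).1) := rfl
      rw [hx, hVV, hVVt, hPM _ ((hJmem _).mpr (traceAux _ _))]
    · ext x
      simp only [Module.End.mul_apply, LinearMap.zero_apply, LieModule.toEnd_apply_apply]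
      have hx : Q x = ιM (((E.symm x).2.1 : Matrix (Fin 3) (Fin 3) ℂ)) := rfl
      have htb : ((E.symm x).2.1 : Matrix (Fin 3) (Fin 3) ℂ).trace = 0 :=
        (hJmem _).mp (E.symm x).2.1.2
      rw [hx, ← lie_skew (ιV w), hMV _ htb, lie_neg, hVV, map_neg, hQVt, neg_zero]
    · ext x
      simp only [Module.End.mul_apply, LinearMap.zero_apply, LieModule.toEnd_apply_apply]
      have hx : R x = ιVt ((E.symm x).2.2) := rfl
      rw [hx, hVVt, ← lie_skew (ιV v), hMV _ ((hJmem _).mpr (traceAux _ _)),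
        map_neg, hRV, neg_zero]
  -- ### bracket relations between the generators
  have bAB : ⁅ιM m1, ιM m2⁆ = 0 := by rw [hMM _ _ tm1 tm2, cm1m2, map_zero]
  have bAC : ⁅ιM m1, ιVt f1v⁆ = 0 := by rw [hMVt _ tm1, cf1m1, neg_zero, map_zero]
  have bAD : ⁅ιM m1, ιV e2v⁆ = 0 := by rw [hMV _ tm1, cm1e2, map_zero]
  have bBC : ⁅ιM m2, ιVt f1v⁆ = 0 := by rw [hMVt _ tm2, cf1m2, neg_zero, map_zero]
  have bBD : ⁅ιM m2, ιV e2v⁆ = 0 := by rw [hMV _ tm2, cm2e2, map_zero]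
  have bCD : ⁅ιVt f1v, ιV e2v⁆ = (3 : ℂ) • ιM m1 := by
    rw [← lie_skew, hVVt, cvmv, cdot, zero_smul, add_zero, LinearMap.map_smul]
    module
  have bSH : ⁅ιM m3, ιM m4⁆ = (-2 : ℂ) • ιM m3 := by
    rw [hMM _ _ tm3 tm4, cm3m4, LinearMap.map_smul]
  have bSA : ⁅ιM m3, ιM m1⁆ = 0 := by rw [hMM _ _ tm3 tm1, cm3m1, map_zero]
  have bSB : ⁅ιM m3, ιM m2⁆ = ιM m1 := by rw [hMM _ _ tm3 tm2, cm3m2]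
  have bSC : ⁅ιM m3, ιVt f1v⁆ = 0 := by rw [hMVt _ tm3, cf1m3, neg_zero, map_zero]
  have bSD : ⁅ιM m3, ιV e2v⁆ = 0 := by rw [hMV _ tm3, cm3e2, map_zero]
  have bHA : ⁅ιM m4, ιM m1⁆ = ιM m1 := by rw [hMM _ _ tm4 tm1, cm4m1]
  have bHB : ⁅ιM m4, ιM m2⁆ = -ιM m2 := by rw [hMM _ _ tm4 tm2, cm4m2, LinearMap.map_neg]
  have bHC : ⁅ιM m4, ιVt f1v⁆ = 0 := by rw [hMVt _ tm4, cf1m4, neg_zero, map_zero]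
  have bHD : ⁅ιM m4, ιV e2v⁆ = ιV e2v := by rw [hMV _ tm4, cm4e2]
  -- ### the generator sets
  set NS : Set L := {ιM m1, ιM m2, ιVt f1v, ιV e2v} with hNS
  set SS : Set L := {ιM m3, ιM m4} with hSS
  have hANS : ιM m1 ∈ NS := by rw [hNS]; left; rfl
  -- [N, N] generator computation
  have hNgen : ∀ x ∈ NS, ∀ y ∈ NS, ⁅x, y⁆ ∈ Submodule.span ℂ ({ιM m1} : Set L) := by
    intro x hx y hy
    rw [hNS] at hx hy
    simp only [Set.mem_insert_iff, Set.mem_singleton_iff] at hx hy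
    obtain rfl | rfl | rfl | rfl := hx <;> obtain rfl | rfl | rfl | rfl := hy
    · rw [lie_self]; exact zero_mem _
    · rw [bAB]; exact zero_mem _
    · rw [bAC]; exact zero_mem _
    · rw [bAD]; exact zero_mem _
    · rw [← lie_skew, bAB, neg_zero]; exact zero_mem _
    · rw [lie_self]; exact zero_mem _
    · rw [bBC]; exact zero_mem _
    · rw [bBD]; exact zero_mem _
    · rw [← lie_skew, bAC, neg_zero]; exact zero_mem _
    · rw [← lie_skew, bBC, neg_zero]; exact zero_mem _
    · rw [lie_self]; exact zero_mem _
    · rw [bCD]; exact Submodule.smul_mem _ _ (Submodule.mem_span_singleton_self _)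
    · rw [← lie_skew, bAD, neg_zero]; exact zero_mem _
    · rw [← lie_skew, bBD, neg_zero]; exact zero_mem _
    · rw [← lie_skew, bCD]
      exact Submodule.neg_mem _ (Submodule.smul_mem _ _ (Submodule.mem_span_singleton_self _))
    · rw [lie_self]; exact zero_mem _
  have hNN : ∀ x ∈ Submodule.span ℂ NS, ∀ y ∈ Submodule.span ℂ NS,
      ⁅x, y⁆ ∈ Submodule.span ℂ ({ιM m1} : Set L) := brkt_span hNgen
  -- [N, span{A}] = 0
  have hNAgen : ∀ x ∈ NS, ∀ y ∈ ({ιM m1} : Set L), ⁅x, y⁆ ∈ (⊥ : Submodule ℂ L) := by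
    intro x hx y hy
    rw [hNS] at hx
    simp only [Set.mem_insert_iff, Set.mem_singleton_iff] at hx hy
    subst hy
    obtain rfl | rfl | rfl | rfl := hx
    · rw [lie_self]; exact zero_mem _
    · rw [← lie_skew, bAB, neg_zero]; exact zero_mem _
    · rw [← lie_skew, bAC, neg_zero]; exact zero_mem _
    · rw [← lie_skew, bAD, neg_zero]; exact zero_mem _
  have hNbot : ∀ x ∈ Submodule.span ℂ NS, ∀ y ∈ Submodule.span ℂ ({ιM m1} : Set L),
      ⁅x, y⁆ = (0 : L) := fun x hx y hy =>
    (Submodule.mem_bot ℂ).mp (brkt_span hNAgen x hx y hy)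
  -- the nilpotent subalgebra K
  have hZle : Submodule.span ℂ ({ιM m1} : Set L) ≤ Submodule.span ℂ NS :=
    Submodule.span_mono (Set.singleton_subset_iff.mpr hANS)
  let K : LieSubalgebra ℂ L :=
    { Submodule.span ℂ NS with
      lie_mem' := fun {x y} hx hy => hZle (hNN x hx y hy) }
  have hKnil : LieRing.IsNilpotent K := by
    have hlcs1 : ∀ n : K, n ∈ LieModule.lowerCentralSeries ℂ K K 1 →
        (n : L) ∈ Submodule.span ℂ ({ιM m1} : Set L) := by
      intro n hn
      rw [show (1 : ℕ) = 0 + 1 from rfl, LieModule.lowerCentralSeries_succ,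
        LieModule.lowerCentralSeries_zero, ← LieSubmodule.mem_toSubmodule,
        LieSubmodule.lieIdeal_oper_eq_linear_span] at hn
      induction hn using Submodule.span_induction with
      | mem m hm =>
          obtain ⟨x, y, rfl⟩ := hm
          rw [LieSubalgebra.coe_bracket]
          exact hNN _ (x : K).2 _ (y : K).2
      | zero => simp
      | add y z _ _ hy hz => simpa using add_mem hy hz
      | smul a y _ hy => simpa using Submodule.smul_mem _ a hy
    rw [LieRing.IsNilpotent, LieModule.isNilpotent_iff ℂ]
    refine ⟨2, ?_⟩
    rw [eq_bot_iff, show (2 : ℕ) = 1 + 1 from rfl, LieModule.lowerCentralSeries_succ,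
      LieSubmodule.lieIdeal_oper_eq_span, LieSubmodule.lieSpan_le]
    rintro m ⟨x, y, rfl⟩
    simp only [SetLike.mem_coe, LieSubmodule.mem_bot]
    apply Subtype.ext
    rw [LieSubalgebra.coe_bracket]
    show ⁅((x : K) : L), ((y : K) : L)⁆ = ((0 : K) : L)
    rw [ZeroMemClass.coe_zero]
    exact hNbot _ (x : K).2 _ (hlcs1 (y : K) y.2)
  -- the subalgebra S
  have hSgen : ∀ x ∈ SS, ∀ y ∈ SS, ⁅x, y⁆ ∈ Submodule.span ℂ SS := by
    intro x hx y hy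
    rw [hSS] at hx hy
    simp only [Set.mem_insert_iff, Set.mem_singleton_iff] at hx hy
    obtain rfl | rfl := hx <;> obtain rfl | rfl := hy
    · rw [lie_self]; exact zero_mem _
    · rw [bSH]
      exact Submodule.smul_mem _ _ (Submodule.subset_span (by rw [hSS]; left; rfl))
    · rw [← lie_skew, bSH]
      exact Submodule.neg_mem _
        (Submodule.smul_mem _ _ (Submodule.subset_span (by rw [hSS]; left; rfl)))
    · rw [lie_self]; exact zero_mem _
  let KS : LieSubalgebra ℂ L :=
    { Submodule.span ℂ SS with
      lie_mem' := fun {x y} hx hy => brkt_span hSgen x hx y hy }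
  -- [S, N] ⊆ N ∩ ker χ
  set χ : L →ₗ[ℂ] ℂ := killingForm ℂ L (ιV f1v) with hχ
  have hWA : ιM m1 ∈ Submodule.span ℂ NS ⊓ LinearMap.ker χ :=
    ⟨Submodule.subset_span hANS, LinearMap.mem_ker.mpr (kVM _ _ tm1)⟩
  have hWB : ιM m2 ∈ Submodule.span ℂ NS ⊓ LinearMap.ker χ :=
    ⟨Submodule.subset_span (by rw [hNS]; right; left; rfl),
      LinearMap.mem_ker.mpr (kVM _ _ tm2)⟩
  have hWD : ιV e2v ∈ Submodule.span ℂ NS ⊓ LinearMap.ker χ :=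
    ⟨Submodule.subset_span (by rw [hNS]; right; right; right; rfl),
      LinearMap.mem_ker.mpr (kVV _ _)⟩
  have hSNgen : ∀ x ∈ SS, ∀ y ∈ NS,
      ⁅x, y⁆ ∈ Submodule.span ℂ NS ⊓ LinearMap.ker χ := by
    intro x hx y hy
    rw [hSS] at hx
    rw [hNS] at hy
    simp only [Set.mem_insert_iff, Set.mem_singleton_iff] at hx hy
    obtain rfl | rfl := hx <;> obtain rfl | rfl | rfl | rfl := hy
    · rw [bSA]; exact zero_mem _
    · rw [bSB]; exact hWA
    · rw [bSC]; exact zero_mem _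
    · rw [bSD]; exact zero_mem _
    · rw [bHA]; exact hWA
    · rw [bHB]; exact neg_mem hWB
    · rw [bHC]; exact zero_mem _
    · rw [bHD]; exact hWD
  have hSN : ∀ s ∈ Submodule.span ℂ SS, ∀ n ∈ Submodule.span ℂ NS,
      ⁅s, n⁆ ∈ Submodule.span ℂ NS ⊓ LinearMap.ker χ := brkt_span hSNgen
  have hchiA : Submodule.span ℂ ({ιM m1} : Set L) ≤ LinearMap.ker χ := by
    rw [Submodule.span_le, Set.singleton_subset_iff]
    exact LinearMap.mem_ker.mpr (kVM _ _ tm1)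
  refine ⟨⟨K, rfl, hKnil⟩, ⟨KS, rfl⟩,
    fun s hs n hn => (hSN s hs n hn).1,
    fun x hx y hy => LinearMap.mem_ker.mp (hchiA (hNN x hx y hy)),
    fun s hs n hn => LinearMap.mem_ker.mp (hSN s hs n hn).2⟩
end

section
/- For traceless diagonal matrices a = diag(a₁,a₂,a₃) and b = diag(b₁,b₂,b₃) in 𝔰𝔩₃(ℂ) ⊆ 𝔤₂, the Killing form κ of 𝔤₂ satisfies κ(a,b) = 6·(a₁b₁ + a₂b₂ + a₃b₃) − 2·Σ_{i≠j} aᵢbⱼ (equivalently, κ(a,b) = 8·(a₁b₁ + a₂b₂ + a₃b₃), since a₁+a₂+a₃ = b₁+b₂+b₃ = 0). -/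
open Matrix

noncomputable section

def matOf : (Fin 8 → ℂ) →ₗ[ℂ] Matrix (Fin 3) (Fin 3) ℂ where
  toFun c := Matrix.of ![![c 6, c 0, c 1], ![c 2, -c 6 - c 7, c 3], ![c 4, c 5, c 7]]
  map_add' x y := by
    ext i j; fin_cases i <;> fin_cases j <;> simp <;> ring
  map_smul' r x := by
    ext i j; fin_cases i <;> fin_cases j <;> simp <;> ring

lemma matOf_trace (c : Fin 8 → ℂ) : (matOf c).trace = 0 := by
  simp [matOf, Matrix.trace, Fin.sum_univ_three]; ring

def coeffOf (x : Matrix (Fin 3) (Fin 3) ℂ) : Fin 8 → ℂ :=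
  ![x 0 1, x 0 2, x 1 0, x 1 2, x 2 0, x 2 1, x 0 0, x 2 2]

lemma coeff_matOf (c : Fin 8 → ℂ) : coeffOf (matOf c) = c := by
  funext k; fin_cases k <;> rfl

lemma matOf_coeff (x : Matrix (Fin 3) (Fin 3) ℂ) (hx : x.trace = 0) :
    matOf (coeffOf x) = x := by
  have h : x 1 1 = -x 0 0 - x 2 2 := by
    simp [Matrix.trace, Fin.sum_univ_three] at hx; linear_combination hx
  ext i j; fin_cases i <;> fin_cases j <;> (try rfl) <;>
    (show -x 0 0 - x 2 2 = x 1 1; linear_combination -h)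

def stdM : Fin 8 → Matrix (Fin 3) (Fin 3) ℂ :=
  ![Matrix.of ![![0,1,0],![0,0,0],![0,0,0]],
    Matrix.of ![![0,0,1],![0,0,0],![0,0,0]],
    Matrix.of ![![0,0,0],![1,0,0],![0,0,0]],
    Matrix.of ![![0,0,0],![0,0,1],![0,0,0]],
    Matrix.of ![![0,0,0],![0,0,0],![1,0,0]],
    Matrix.of ![![0,0,0],![0,0,0],![0,1,0]],
    Matrix.of ![![1,0,0],![0,-1,0],![0,0,0]],
    Matrix.of ![![0,0,0],![0,-1,0],![0,0,1]]]

@[simp] lemma stdM_0 : stdM 0 = Matrix.of ![![0,1,0],![0,0,0],![0,0,0]] := rfl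
@[simp] lemma stdM_1 : stdM 1 = Matrix.of ![![0,0,1],![0,0,0],![0,0,0]] := rfl
@[simp] lemma stdM_2 : stdM 2 = Matrix.of ![![0,0,0],![1,0,0],![0,0,0]] := rfl
@[simp] lemma stdM_3 : stdM 3 = Matrix.of ![![0,0,0],![0,0,1],![0,0,0]] := rfl
@[simp] lemma stdM_4 : stdM 4 = Matrix.of ![![0,0,0],![0,0,0],![1,0,0]] := rfl
@[simp] lemma stdM_5 : stdM 5 = Matrix.of ![![0,0,0],![0,0,0],![0,1,0]] := rfl
@[simp] lemma stdM_6 : stdM 6 = Matrix.of ![![1,0,0],![0,-1,0],![0,0,0]] := rfl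
@[simp] lemma stdM_7 : stdM 7 = Matrix.of ![![0,0,0],![0,-1,0],![0,0,1]] := rfl

lemma matOf_single (k : Fin 8) : matOf (Pi.single k 1) = stdM k := by
  fin_cases k <;> · ext i j; fin_cases i <;> fin_cases j <;> (try rfl) <;> simp [matOf, Pi.single_apply]

def mu8 (d c : Fin 3 → ℂ) : Fin 8 → ℂ :=
  ![(d 0 - d 1) * (c 0 - c 1), (d 0 - d 2) * (c 0 - c 2),
    (d 1 - d 0) * (c 1 - c 0), (d 1 - d 2) * (c 1 - c 2),
    (d 2 - d 0) * (c 2 - c 0), (d 2 - d 1) * (c 2 - c 1), 0, 0]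

@[simp] lemma mu8_0 (d c : Fin 3 → ℂ) : mu8 d c 0 = (d 0 - d 1) * (c 0 - c 1) := rfl
@[simp] lemma mu8_1 (d c : Fin 3 → ℂ) : mu8 d c 1 = (d 0 - d 2) * (c 0 - c 2) := rfl
@[simp] lemma mu8_2 (d c : Fin 3 → ℂ) : mu8 d c 2 = (d 1 - d 0) * (c 1 - c 0) := rfl
@[simp] lemma mu8_3 (d c : Fin 3 → ℂ) : mu8 d c 3 = (d 1 - d 2) * (c 1 - c 2) := rfl
@[simp] lemma mu8_4 (d c : Fin 3 → ℂ) : mu8 d c 4 = (d 2 - d 0) * (c 2 - c 0) := rfl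
@[simp] lemma mu8_5 (d c : Fin 3 → ℂ) : mu8 d c 5 = (d 2 - d 1) * (c 2 - c 1) := rfl
@[simp] lemma mu8_6 (d c : Fin 3 → ℂ) : mu8 d c 6 = 0 := rfl
@[simp] lemma mu8_7 (d c : Fin 3 → ℂ) : mu8 d c 7 = 0 := rfl

lemma g2_basis_exists {L : Type*} [LieRing L] [LieAlgebra ℂ L]
    (ιV ιVt : (Fin 3 → ℂ) →ₗ[ℂ] L) (ιM : Matrix (Fin 3) (Fin 3) ℂ →ₗ[ℂ] L)
    (hbij : Function.Bijective
      (fun p : (Fin 3 → ℂ) × {x : Matrix (Fin 3) (Fin 3) ℂ // x.trace = 0} × (Fin 3 → ℂ) =>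
        ιV p.1 + ιM p.2.1.val + ιVt p.2.2)) :
    ∃ B : Module.Basis (Fin 3 ⊕ Fin 8 ⊕ Fin 3) ℂ L,
      (∀ i, B (Sum.inl i) = ιV (Pi.single i 1)) ∧
      (∀ k, B (Sum.inr (Sum.inl k)) = ιM (matOf (Pi.single k 1))) ∧
      (∀ i, B (Sum.inr (Sum.inr i)) = ιVt (Pi.single i 1)) := by
  set F : ((Fin 3 → ℂ) × (Fin 8 → ℂ) × (Fin 3 → ℂ)) →ₗ[ℂ] L :=
      ιV.comp (LinearMap.fst ℂ _ _) +
      (ιM.comp matOf).comp ((LinearMap.fst ℂ _ _).comp (LinearMap.snd ℂ _ _)) +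
      ιVt.comp ((LinearMap.snd ℂ _ _).comp (LinearMap.snd ℂ _ _)) with hFdef
  have hg : Function.Bijective (fun p : (Fin 3 → ℂ) × (Fin 8 → ℂ) × (Fin 3 → ℂ) =>
      ((p.1, ⟨matOf p.2.1, matOf_trace p.2.1⟩, p.2.2) :
        (Fin 3 → ℂ) × {x : Matrix (Fin 3) (Fin 3) ℂ // x.trace = 0} × (Fin 3 → ℂ))) := by
    constructor
    · rintro ⟨v, cc, u⟩ ⟨v', cc', u'⟩ h
      simp only [Prod.mk.injEq, Subtype.mk.injEq] at h
      obtain ⟨h1, h2, h3⟩ := h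
      have : cc = cc' := by rw [← coeff_matOf cc, h2, coeff_matOf]
      simp [h1, h3, this]
    · rintro ⟨v, ⟨x, hx⟩, u⟩
      exact ⟨(v, coeffOf x, u), by simp [matOf_coeff x hx]⟩
  have hF : Function.Bijective F := by
    have he : ⇑F = (fun p : (Fin 3 → ℂ) × {x : Matrix (Fin 3) (Fin 3) ℂ // x.trace = 0} × (Fin 3 → ℂ) =>
        ιV p.1 + ιM p.2.1.val + ιVt p.2.2) ∘
        (fun p : (Fin 3 → ℂ) × (Fin 8 → ℂ) × (Fin 3 → ℂ) =>
          (p.1, ⟨matOf p.2.1, matOf_trace p.2.1⟩, p.2.2)) := rfl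
    rw [he]; exact hbij.comp hg
  set E := LinearEquiv.ofBijective F hF with hE
  set BM := (Pi.basisFun ℂ (Fin 3)).prod ((Pi.basisFun ℂ (Fin 8)).prod (Pi.basisFun ℂ (Fin 3))) with hBM
  refine ⟨BM.map E, ?_, ?_, ?_⟩ <;> intro i <;>
    simp [hBM, Module.Basis.map_apply, Module.Basis.prod_apply, hE, LinearEquiv.ofBijective_apply, hFdef,
      Pi.basisFun_apply, map_zero]

lemma trace_eq_sum_eig {L ι : Type*} [AddCommGroup L] [Module ℂ L] [Fintype ι] [DecidableEq ι]
    (B : Module.Basis ι ℂ L) (f : L →ₗ[ℂ] L) (μ : ι → ℂ) (h : ∀ i, f (B i) = μ i • B i) :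
    LinearMap.trace ℂ L f = ∑ i, μ i := by
  rw [LinearMap.trace_eq_matrix_trace ℂ B, Matrix.trace]
  simp [Matrix.diag, LinearMap.toMatrix_apply, h, Module.Basis.repr_self]

end

/- **Context for 𝔤₂ via its defining decomposition.** `L` is a complex Lie algebra equipped
with linear maps `ιV, ιVt : ℂ³ → L` (columns / rows) and `ιM : Matrix → L` such that
`(v, x, u) ↦ ιV v + ιM x + ιVt u` is a bijection of `V ⊕ 𝔰𝔩₃(ℂ) ⊕ Vᵗ` onto `L` and the bracket
of `L` is the 𝔤₂-bracket: the matrix commutator on `𝔰𝔩₃`, together with `[x,v] = xv`,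
`[x,vᵗ] = -vᵗx`, `[v,w] = 2(v×w)ᵗ`, `[vᵗ,wᵗ] = 2(v×w)`, `[v,wᵗ] = -3vwᵗ + (wᵗv)·Id`. -/
/-- For traceless diagonal matrices `a = diag(a₁,a₂,a₃)`,
`b = diag(b₁,b₂,b₃)` in `𝔰𝔩₃(ℂ) ⊆ 𝔤₂`, the Killing form of `𝔤₂` satisfies
`κ(a,b) = 6·Σ aᵢbᵢ - 2·Σ_{i≠j} aᵢbⱼ = 8·Σ aᵢbᵢ`. -/
theorem stmt13 {L : Type*} [LieRing L] [LieAlgebra ℂ L] [Module.Finite ℂ L]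
    (ιV ιVt : (Fin 3 → ℂ) →ₗ[ℂ] L) (ιM : Matrix (Fin 3) (Fin 3) ℂ →ₗ[ℂ] L)
    (hbij : Function.Bijective
      (fun p : (Fin 3 → ℂ) × {x : Matrix (Fin 3) (Fin 3) ℂ // x.trace = 0} × (Fin 3 → ℂ) =>
        ιV p.1 + ιM p.2.1.val + ιVt p.2.2))
    (hMM : ∀ x y : Matrix (Fin 3) (Fin 3) ℂ, x.trace = 0 → y.trace = 0 →
      ⁅ιM x, ιM y⁆ = ιM (x * y - y * x))
    (hMV : ∀ x : Matrix (Fin 3) (Fin 3) ℂ, x.trace = 0 → ∀ v : Fin 3 → ℂ,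
      ⁅ιM x, ιV v⁆ = ιV (x.mulVec v))
    (hMVt : ∀ x : Matrix (Fin 3) (Fin 3) ℂ, x.trace = 0 → ∀ u : Fin 3 → ℂ,
      ⁅ιM x, ιVt u⁆ = ιVt (-(u ᵥ* x)))
    (hVV : ∀ v w : Fin 3 → ℂ, ⁅ιV v, ιV w⁆ = ιVt ((2 : ℂ) • crossProduct v w))
    (hVtVt : ∀ u w : Fin 3 → ℂ, ⁅ιVt u, ιVt w⁆ = ιV ((2 : ℂ) • crossProduct u w))
    (hVVt : ∀ (v u : Fin 3 → ℂ),
      ⁅ιV v, ιVt u⁆ = ιM (-(3 : ℂ) • vecMulVec v u + (u ⬝ᵥ v) • (1 : Matrix (Fin 3) (Fin 3) ℂ)))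
    :
    ∀ d c : Fin 3 → ℂ, d 0 + d 1 + d 2 = 0 → c 0 + c 1 + c 2 = 0 →
      killingForm ℂ L (ιM (Matrix.diagonal d)) (ιM (Matrix.diagonal c))
          = 6 * (d 0 * c 0 + d 1 * c 1 + d 2 * c 2)
            - 2 * (d 0 * c 1 + d 0 * c 2 + d 1 * c 0 + d 1 * c 2 + d 2 * c 0 + d 2 * c 1) ∧
      killingForm ℂ L (ιM (Matrix.diagonal d)) (ιM (Matrix.diagonal c))
          = 8 * (d 0 * c 0 + d 1 * c 1 + d 2 * c 2) := by
  intro d c hd hc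
  obtain ⟨B, hB1, hB2, hB3⟩ := g2_basis_exists ιV ιVt ιM hbij
  have hdA : (Matrix.diagonal d).trace = 0 := by
    simpa [Matrix.trace, Fin.sum_univ_three] using hd
  have hcA : (Matrix.diagonal c).trace = 0 := by
    simpa [Matrix.trace, Fin.sum_univ_three] using hc
  have hcomm : ∀ X : Matrix (Fin 3) (Fin 3) ℂ,
      (Matrix.diagonal c * X - X * Matrix.diagonal c).trace = 0 := by
    intro X
    rw [Matrix.trace_sub, Matrix.trace_mul_comm, sub_self]
  set μ : (Fin 3 ⊕ Fin 8 ⊕ Fin 3) → ℂ :=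
    Sum.elim (fun i => d i * c i)
      (Sum.elim (mu8 d c) (fun i => d i * c i)) with hμ
  have key : ∀ i, ((LieAlgebra.ad ℂ L (ιM (Matrix.diagonal d))) ∘ₗ
      (LieAlgebra.ad ℂ L (ιM (Matrix.diagonal c)))) (B i) = μ i • B i := by
    rintro (i | k | i)
    · simp only [LinearMap.comp_apply, LieAlgebra.ad_apply, hB1, hμ, Sum.elim_inl]
      rw [hMV _ hcA, hMV _ hdA, ← _root_.map_smul]
      congr 1
      funext j
      rcases eq_or_ne j i with h | h
      · subst h; simp [Matrix.mulVec_diagonal]; try ring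
      · simp [Matrix.mulVec_diagonal, Pi.single_eq_of_ne h,
          Matrix.diagonal_apply_ne c h, Matrix.diagonal_apply_ne c h.symm]
    · have hdiag : ∀ (e : Fin 3 → ℂ) (X : Matrix (Fin 3) (Fin 3) ℂ),
          Matrix.diagonal e * X - X * Matrix.diagonal e
            = Matrix.of (fun i j => (e i - e j) * X i j) := by
        intro e X
        ext i j
        simp [Matrix.diagonal_mul, Matrix.mul_diagonal, Matrix.sub_apply]
        ring
      have hstd : (stdM k).trace = 0 := by rw [← matOf_single]; exact matOf_trace _
      simp only [LinearMap.comp_apply, LieAlgebra.ad_apply, hB2, hμ, Sum.elim_inr, Sum.elim_inl,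
        matOf_single]
      rw [hMM _ _ hcA hstd, hMM _ _ hdA (hcomm _), hdiag, hdiag, ← map_smul ιM]
      congr 1
      fin_cases k <;>
        · ext i j
          fin_cases i <;> fin_cases j <;>
            · simp [Matrix.smul_apply, Matrix.vecHead, Matrix.vecTail, Function.comp]
              try ring
    · simp only [LinearMap.comp_apply, LieAlgebra.ad_apply, hB3, hμ, Sum.elim_inr]
      rw [hMVt _ hcA, hMVt _ hdA, ← _root_.map_smul]
      congr 1
      funext j
      rcases eq_or_ne j i with h | h
      · subst h; simp [Matrix.vecMul_diagonal]; try ring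
      · simp [Matrix.vecMul_diagonal, Pi.single_eq_of_ne h,
          Matrix.diagonal_apply_ne c h, Matrix.diagonal_apply_ne c h.symm]
  rw [killingForm_apply_apply, trace_eq_sum_eig B _ μ key]
  rw [Fintype.sum_sum_type, Fintype.sum_sum_type]
  simp only [hμ, Sum.elim_inl, Sum.elim_inr, Fin.sum_univ_three, Fin.sum_univ_eight]
  constructor
  · simp; ring
  · simp; linear_combination (-2 * (c 0 + c 1 + c 2)) * hd
end

section
/- Let 𝔥 ⊆ 𝔤₂ be the diagonal Cartan subalgebra and let aᵢ ∈ 𝔥* be defined by aᵢ(diag(t₁,t₂,t₃)) = tᵢ. Then for every H ∈ 𝔥 and all i ≠ j: κ(tᵢ, H) = aᵢ(H) where tᵢ = (3Eᵢᵢ − Id)/24, and κ(tᵢⱼ, H) = (aᵢ − aⱼ)(H) where tᵢⱼ = (Eᵢᵢ − Eⱼⱼ)/8; consequently the squared lengths ‖aᵢ‖² = κ(tᵢ, tᵢ) = 1/12 and ‖aᵢ − aⱼ‖² = κ(tᵢⱼ, tᵢⱼ) = 1/4, so that ‖aᵢ − aⱼ‖² = 3·‖aᵢ‖². -/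
open Matrix

noncomputable section Stmt14Aux

lemma stdBasis_repr3 (M : Matrix (Fin 3) (Fin 3) ℂ) (p : Fin 3 × Fin 3) :
    (Matrix.stdBasis ℂ (Fin 3) (Fin 3)).repr M p = M p.1 p.2 := by
  have hM : M = ∑ q : Fin 3 × Fin 3, M q.1 q.2 • Matrix.stdBasis ℂ (Fin 3) (Fin 3) q := by
    ext i j
    simp [Matrix.stdBasis_eq_single, Matrix.single, Fintype.sum_prod_type,
      Matrix.sum_apply, ite_and]
  conv_lhs => rw [hM]
  simp only [map_sum, _root_.map_smul, Module.Basis.repr_self, Finsupp.coe_finset_sum, Finsupp.coe_smul,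
    Finset.sum_apply, Pi.smul_apply, Finsupp.single_apply, smul_eq_mul, mul_ite, mul_one, mul_zero]
  rw [Finset.sum_eq_single p (by intro q _ h; simp [h]) (by simp)]
  simp

lemma trace_matrixEnd (φ : Matrix (Fin 3) (Fin 3) ℂ →ₗ[ℂ] Matrix (Fin 3) (Fin 3) ℂ) :
    LinearMap.trace ℂ _ φ = ∑ p : Fin 3 × Fin 3, φ (Matrix.single p.1 p.2 1) p.1 p.2 := by
  rw [LinearMap.trace_eq_matrix_trace ℂ (Matrix.stdBasis ℂ (Fin 3) (Fin 3)), Matrix.trace]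
  simp only [Matrix.diag, LinearMap.toMatrix_apply, stdBasis_repr3]
  exact Finset.sum_congr rfl fun p _ => by
    obtain ⟨i, j⟩ := p; rw [Matrix.stdBasis_eq_single]

lemma trace_toLin3 (m : Matrix (Fin 3) (Fin 3) ℂ) :
    LinearMap.trace ℂ (Fin 3 → ℂ) (Matrix.toLin' m) = m.trace := by
  rw [LinearMap.trace_eq_matrix_trace ℂ (Pi.basisFun ℂ (Fin 3)),
    LinearMap.toMatrix_eq_toMatrix', LinearMap.toMatrix'_toLin']

def adphi (a : Matrix (Fin 3) (Fin 3) ℂ) :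
    Matrix (Fin 3) (Fin 3) ℂ →ₗ[ℂ] Matrix (Fin 3) (Fin 3) ℂ :=
  LinearMap.mulLeft ℂ a - LinearMap.mulRight ℂ a

lemma adphi_apply (a x : Matrix (Fin 3) (Fin 3) ℂ) : adphi a x = a * x - x * a := rfl

lemma trace_adphi_comp (a b : Matrix (Fin 3) (Fin 3) ℂ) :
    LinearMap.trace ℂ _ (adphi a ∘ₗ adphi b) = 6 * (a * b).trace - 2 * a.trace * b.trace := by
  rw [trace_matrixEnd]
  simp only [LinearMap.comp_apply, adphi_apply, Matrix.mul_sub, Matrix.sub_mul]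
  simp [Matrix.trace, Matrix.mul_apply, Matrix.single, Fintype.sum_prod_type,
    Fin.sum_univ_three, Matrix.diag, ite_and, mul_ite]
  ring

theorem killing_key {L : Type*} [LieRing L] [LieAlgebra ℂ L] [Module.Finite ℂ L]
    (ιV ιVt : (Fin 3 → ℂ) →ₗ[ℂ] L) (ιM : Matrix (Fin 3) (Fin 3) ℂ →ₗ[ℂ] L)
    (hbij : Function.Bijective
      (fun p : (Fin 3 → ℂ) × {x : Matrix (Fin 3) (Fin 3) ℂ // x.trace = 0} × (Fin 3 → ℂ) =>
        ιV p.1 + ιM p.2.1.val + ιVt p.2.2))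
    (hMM : ∀ x y : Matrix (Fin 3) (Fin 3) ℂ, x.trace = 0 → y.trace = 0 →
      ⁅ιM x, ιM y⁆ = ιM (x * y - y * x))
    (hMV : ∀ x : Matrix (Fin 3) (Fin 3) ℂ, x.trace = 0 → ∀ v : Fin 3 → ℂ,
      ⁅ιM x, ιV v⁆ = ιV (x.mulVec v))
    (hMVt : ∀ x : Matrix (Fin 3) (Fin 3) ℂ, x.trace = 0 → ∀ u : Fin 3 → ℂ,
      ⁅ιM x, ιVt u⁆ = ιVt (-(u ᵥ* x)))
    (a b : Matrix (Fin 3) (Fin 3) ℂ) (ha : a.trace = 0) (hb : b.trace = 0) :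
    killingForm ℂ L (ιM a) (ιM b) = 8 * (a * b).trace := by
  classical
  set sl : Submodule ℂ (Matrix (Fin 3) (Fin 3) ℂ) :=
    LinearMap.ker (Matrix.traceLinearMap (Fin 3) ℂ ℂ) with hsl
  have memsl : ∀ m : Matrix (Fin 3) (Fin 3) ℂ, m ∈ sl ↔ m.trace = 0 := fun m =>
    LinearMap.mem_ker
  let f : ((Fin 3 → ℂ) × sl × (Fin 3 → ℂ)) →ₗ[ℂ] L :=
    ιV ∘ₗ LinearMap.fst ℂ _ _ +
      (ιM ∘ₗ sl.subtype) ∘ₗ (LinearMap.fst ℂ _ _ ∘ₗ LinearMap.snd ℂ _ _) +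
      ιVt ∘ₗ (LinearMap.snd ℂ _ _ ∘ₗ LinearMap.snd ℂ _ _)
  have hfapp : ∀ p : ((Fin 3 → ℂ) × sl × (Fin 3 → ℂ)),
      f p = ιV p.1 + ιM p.2.1.1 + ιVt p.2.2 := fun p => rfl
  have hfbij : Function.Bijective f := by
    have heq : (f : ((Fin 3 → ℂ) × sl × (Fin 3 → ℂ)) → L)
        = (fun p : (Fin 3 → ℂ) × {x : Matrix (Fin 3) (Fin 3) ℂ // x.trace = 0} × (Fin 3 → ℂ) =>
            ιV p.1 + ιM p.2.1.val + ιVt p.2.2) ∘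
          ((Equiv.refl (Fin 3 → ℂ)).prodCongr
            (((Equiv.subtypeEquivRight memsl)).prodCongr (Equiv.refl (Fin 3 → ℂ)))) := by
      funext p; rfl
    rw [heq]
    exact hbij.comp (Equiv.bijective _)
  let e : ((Fin 3 → ℂ) × sl × (Fin 3 → ℂ)) ≃ₗ[ℂ] L := LinearEquiv.ofBijective f hfbij
  have hmem : ∀ (c : Matrix (Fin 3) (Fin 3) ℂ) (x : Matrix (Fin 3) (Fin 3) ℂ),
      adphi c x ∈ sl := by
    intro c x
    rw [memsl, adphi_apply, Matrix.trace_sub, sub_eq_zero]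
    exact Matrix.trace_mul_comm c x
  let D : Matrix (Fin 3) (Fin 3) ℂ →
      ((Fin 3 → ℂ) × sl × (Fin 3 → ℂ)) →ₗ[ℂ] ((Fin 3 → ℂ) × sl × (Fin 3 → ℂ)) := fun c =>
    (Matrix.toLin' c).prodMap
      (((adphi c).restrict (fun x _ => hmem c x)).prodMap (Matrix.toLin' (-cᵀ)))
  have hD : ∀ (c : Matrix (Fin 3) (Fin 3) ℂ) (hc : c.trace = 0)
      (p : ((Fin 3 → ℂ) × sl × (Fin 3 → ℂ))), f (D c p) = ⁅ιM c, f p⁆ := by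
    intro c hc p
    rw [hfapp, hfapp, lie_add, lie_add, hMV c hc, hMM c p.2.1.1 hc ((memsl _).1 p.2.1.2),
      hMVt c hc]
    simp only [D, LinearMap.prodMap_apply, Matrix.toLin'_apply, LinearMap.restrict_coe_apply,
      adphi_apply, Matrix.neg_mulVec, Matrix.mulVec_transpose]
  have had : ∀ (c : Matrix (Fin 3) (Fin 3) ℂ) (hc : c.trace = 0),
      LieAlgebra.ad ℂ L (ιM c) = e.conj (D c) := by
    intro c hc
    apply LinearMap.ext; intro y
    obtain ⟨p, rfl⟩ := e.surjective y
    rw [LieAlgebra.ad_apply, LinearEquiv.conj_apply]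
    simp only [LinearMap.comp_apply, LinearEquiv.coe_coe]
    rw [e.symm_apply_apply]
    have h1 : e p = f p := rfl
    have h2 : e (D c p) = f (D c p) := rfl
    rw [h1, h2, hD c hc p]
  rw [killingForm_apply_apply, had a ha, had b hb, ← LinearEquiv.conj_comp,
    LinearMap.trace_conj']
  have hcomp : D a ∘ₗ D b
      = (Matrix.toLin' a ∘ₗ Matrix.toLin' b).prodMap
        ((((adphi a).restrict (p := sl) (q := sl) (fun x _ => hmem a x)) ∘ₗ
          ((adphi b).restrict (p := sl) (q := sl) (fun x _ => hmem b x))).prodMap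
          (Matrix.toLin' (-aᵀ) ∘ₗ Matrix.toLin' (-bᵀ))) := by
    rw [LinearMap.prodMap_comp, LinearMap.prodMap_comp]
  rw [hcomp, LinearMap.trace_prodMap', LinearMap.trace_prodMap']
  have t1 : LinearMap.trace ℂ (Fin 3 → ℂ) (Matrix.toLin' a ∘ₗ Matrix.toLin' b)
      = (a * b).trace := by rw [← Matrix.toLin'_mul, trace_toLin3]
  have t3 : LinearMap.trace ℂ (Fin 3 → ℂ) (Matrix.toLin' (-aᵀ) ∘ₗ Matrix.toLin' (-bᵀ))
      = (a * b).trace := by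
    rw [← Matrix.toLin'_mul, trace_toLin3]
    rw [Matrix.neg_mul, Matrix.mul_neg, neg_neg, ← Matrix.transpose_mul,
      Matrix.trace_transpose, Matrix.trace_mul_comm]
  have t2 : LinearMap.trace ℂ sl
      ((((adphi a).restrict (p := sl) (q := sl) (fun x _ => hmem a x)) ∘ₗ
        ((adphi b).restrict (p := sl) (q := sl) (fun x _ => hmem b x)))) = 6 * (a * b).trace := by
    have hrc : (((adphi a).restrict (p := sl) (q := sl) (fun x _ => hmem a x)) ∘ₗ
        ((adphi b).restrict (p := sl) (q := sl) (fun x _ => hmem b x)))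
        = (adphi a ∘ₗ adphi b).restrict (p := sl) (q := sl) (fun x _ => hmem a _) := by
      ext x; rfl
    rw [hrc, LinearMap.trace_restrict_eq_of_forall_mem sl (adphi a ∘ₗ adphi b)
      (fun x => hmem a _), trace_adphi_comp, ha, hb]
    ring
  rw [t1, t2, t3]; ring

end Stmt14Aux

/- **Context for 𝔤₂ via its defining decomposition.** `L` is a complex Lie algebra equipped
with linear maps `ιV, ιVt : ℂ³ → L` (columns / rows) and `ιM : Matrix → L` such that
`(v, x, u) ↦ ιV v + ιM x + ιVt u` is a bijection of `V ⊕ 𝔰𝔩₃(ℂ) ⊕ Vᵗ` onto `L` and the bracket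
of `L` is the 𝔤₂-bracket: the matrix commutator on `𝔰𝔩₃`, together with `[x,v] = xv`,
`[x,vᵗ] = -vᵗx`, `[v,w] = 2(v×w)ᵗ`, `[vᵗ,wᵗ] = 2(v×w)`, `[v,wᵗ] = -3vwᵗ + (wᵗv)·Id`. -/
/-- With `tᵢ = (3Eᵢᵢ - Id)/24` and `tᵢⱼ = (Eᵢᵢ - Eⱼⱼ)/8`, for every
traceless diagonal `H = diag(d)`: `κ(tᵢ, H) = aᵢ(H) = d i` and `κ(tᵢⱼ, H) = (aᵢ - aⱼ)(H)`;
moreover `‖aᵢ‖² = κ(tᵢ,tᵢ) = 1/12`, `‖aᵢ-aⱼ‖² = κ(tᵢⱼ,tᵢⱼ) = 1/4 = 3·‖aᵢ‖²`. -/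
theorem stmt14 {L : Type*} [LieRing L] [LieAlgebra ℂ L] [Module.Finite ℂ L]
    (ιV ιVt : (Fin 3 → ℂ) →ₗ[ℂ] L) (ιM : Matrix (Fin 3) (Fin 3) ℂ →ₗ[ℂ] L)
    (hbij : Function.Bijective
      (fun p : (Fin 3 → ℂ) × {x : Matrix (Fin 3) (Fin 3) ℂ // x.trace = 0} × (Fin 3 → ℂ) =>
        ιV p.1 + ιM p.2.1.val + ιVt p.2.2))
    (hMM : ∀ x y : Matrix (Fin 3) (Fin 3) ℂ, x.trace = 0 → y.trace = 0 →
      ⁅ιM x, ιM y⁆ = ιM (x * y - y * x))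
    (hMV : ∀ x : Matrix (Fin 3) (Fin 3) ℂ, x.trace = 0 → ∀ v : Fin 3 → ℂ,
      ⁅ιM x, ιV v⁆ = ιV (x.mulVec v))
    (hMVt : ∀ x : Matrix (Fin 3) (Fin 3) ℂ, x.trace = 0 → ∀ u : Fin 3 → ℂ,
      ⁅ιM x, ιVt u⁆ = ιVt (-(u ᵥ* x)))
    (hVV : ∀ v w : Fin 3 → ℂ, ⁅ιV v, ιV w⁆ = ιVt ((2 : ℂ) • crossProduct v w))
    (hVtVt : ∀ u w : Fin 3 → ℂ, ⁅ιVt u, ιVt w⁆ = ιV ((2 : ℂ) • crossProduct u w))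
    (hVVt : ∀ (v u : Fin 3 → ℂ),
      ⁅ιV v, ιVt u⁆ = ιM (-(3 : ℂ) • vecMulVec v u + (u ⬝ᵥ v) • (1 : Matrix (Fin 3) (Fin 3) ℂ)))
    :
    ∀ i j : Fin 3, i ≠ j →
      ∀ ti tij : Matrix (Fin 3) (Fin 3) ℂ,
        ti = (24 : ℂ)⁻¹ • ((3 : ℂ) • Matrix.single i i 1 - 1) →
        tij = (8 : ℂ)⁻¹ • (Matrix.single i i 1 - Matrix.single j j 1) →
        (∀ d : Fin 3 → ℂ, d 0 + d 1 + d 2 = 0 →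
          killingForm ℂ L (ιM ti) (ιM (Matrix.diagonal d)) = d i ∧
          killingForm ℂ L (ιM tij) (ιM (Matrix.diagonal d)) = d i - d j) ∧
        killingForm ℂ L (ιM ti) (ιM ti) = 1 / 12 ∧
        killingForm ℂ L (ιM tij) (ιM tij) = 1 / 4 ∧
        killingForm ℂ L (ιM tij) (ιM tij) = 3 * killingForm ℂ L (ιM ti) (ιM ti) := by
  intro i j hij ti tij hti htij
  have key := killing_key ιV ιVt ιM hbij hMM hMV hMVt
  have hti0 : ti.trace = 0 := by
    subst hti
    simp [Matrix.trace, Matrix.diag, Fin.sum_univ_three, Matrix.single,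
      Matrix.one_apply]
    fin_cases i <;> simp <;> ring
  have htij0 : tij.trace = 0 := by
    subst htij
    simp [Matrix.trace, Matrix.diag, Fin.sum_univ_three, Matrix.single]
    fin_cases i <;> fin_cases j <;> simp <;> ring
  have h2 : killingForm ℂ L (ιM ti) (ιM ti) = 1 / 12 := by
    rw [key ti ti hti0 hti0, hti]
    fin_cases i <;>
      (simp [Matrix.trace, Matrix.diag, Fin.sum_univ_three, Matrix.mul_apply,
        Matrix.single, Matrix.one_apply]; norm_num)
  have h3 : killingForm ℂ L (ιM tij) (ιM tij) = 1 / 4 := by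
    rw [key tij tij htij0 htij0, htij]
    fin_cases i <;> fin_cases j <;>
      first
      | exact absurd rfl hij
      | (simp [Matrix.trace, Matrix.diag, Fin.sum_univ_three, Matrix.mul_apply,
          Matrix.single]; norm_num)
  refine ⟨?_, h2, h3, by rw [h3, h2]; norm_num⟩
  · intro d hd
    have hd0 : (Matrix.diagonal d).trace = 0 := by
      simpa [Matrix.trace, Matrix.diag, Fin.sum_univ_three] using hd
    constructor
    · rw [key ti (Matrix.diagonal d) hti0 hd0, hti]
      fin_cases i <;>
        (simp [Matrix.trace, Matrix.diag, Fin.sum_univ_three, Matrix.mul_apply,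
          Matrix.single, Matrix.diagonal, Matrix.one_apply];
         linear_combination (-1/3 : ℂ) * hd)
    · rw [key tij (Matrix.diagonal d) htij0 hd0, htij]
      fin_cases i <;> fin_cases j <;>
        first
        | exact absurd rfl hij
        | (simp [Matrix.trace, Matrix.diag, Fin.sum_univ_three, Matrix.mul_apply,
            Matrix.single, Matrix.diagonal]; ring)
end
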